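/- For every point (ε₀, τ₀) in the interior of the set of achievable edge/triangle density pairs, there exist two graphons g, g' with ε(g)=ε(g')=ε₀ and τ(g)=τ(g')=τ₀ that are inequivalent, i.e., g' is not of the form g∘(φ×φ) for any measure-preserving bijection φ of [0,1] (for instance, g and g' can be chosen as step functions with different numbers or sizes of steps). -/

import Mathlib

open MeasureTheory Real Set

noncomputable section

def I01 : Set ℝ := Set.Icc 0 1

def IsGraphon (g : ℝ → ℝ → ℝ) : Prop :=
  Measurable (Function.uncurry g) ∧ (∀ x y, g x y = g y x) ∧ ∀ x y, g x y ∈ Set.Icc (0:ℝ) 1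

def edgeDensity (g : ℝ → ℝ → ℝ) : ℝ := ∫ x in I01, ∫ y in I01, g x y

def triDensity (g : ℝ → ℝ → ℝ) : ℝ :=
  ∫ x in I01, ∫ y in I01, ∫ z in I01, g x y * g y z * g z x

def μ2 : Measure (ℝ × ℝ) := (volume.restrict I01).prod (volume.restrict I01)

/-- Graphon equivalence: equality a.e. after composing with `φ × φ` for a
measure-preserving bijection `φ` of `[0,1]`. -/
def GraphonEquiv (g g' : ℝ → ℝ → ℝ) : Prop :=
  ∃ φ : ℝ → ℝ, Set.BijOn φ I01 I01 ∧
    MeasurePreserving φ (volume.restrict I01) (volume.restrict I01) ∧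
    (∀ᵐ p ∂μ2, g' p.1 p.2 = g (φ p.1) (φ p.2))

/-- The Razborov region of achievable edge/triangle density pairs. -/
def Razborov : Set (ℝ × ℝ) :=
  {p | ∃ g : ℝ → ℝ → ℝ, IsGraphon g ∧ edgeDensity g = p.1 ∧ triDensity g = p.2}

-- ## Basics

lemma measurableSet_I01 : MeasurableSet I01 := measurableSet_Icc

instance : IsProbabilityMeasure (volume.restrict I01) := by
  constructor
  rw [Measure.restrict_apply_univ]
  simp [I01]

lemma integrableOn_of_bdd {f : ℝ → ℝ} {C : ℝ} (hm : Measurable f) (hb : ∀ x, |f x| ≤ C)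
    {s : Set ℝ} (hs : volume s ≠ ⊤) : IntegrableOn f s := by
  refine Integrable.mono' (g := fun _ => C) ?_ (hm.aestronglyMeasurable.restrict) ?_
  · exact integrable_const_iff.2 (Or.inr ⟨by simpa [lt_top_iff_ne_top] using hs⟩)
  · exact Filter.Eventually.of_forall fun x => by simpa using hb x

lemma integrableOn_I01_of_bdd {f : ℝ → ℝ} {C : ℝ} (hm : Measurable f) (hb : ∀ x, |f x| ≤ C) :
    IntegrableOn f I01 :=
  integrableOn_of_bdd hm hb (by simp [I01])

lemma abs_integral_le {f : ℝ → ℝ} {C : ℝ} (hb : ∀ x, |f x| ≤ C) :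
    |∫ x in I01, f x| ≤ C := by
  have := norm_integral_le_of_norm_le_const (μ := volume.restrict I01) (f := f) (C := C)
    (Filter.Eventually.of_forall fun x => by simpa using hb x)
  simpa using this

lemma meas_inner {f : ℝ → ℝ → ℝ} (hm : Measurable (Function.uncurry f)) :
    Measurable fun x => ∫ y in I01, f x y := by
  have : StronglyMeasurable fun x => ∫ y in I01, (fun p : ℝ × ℝ => f p.1 p.2) (x, y) :=
    (hm.stronglyMeasurable).integral_prod_right'
  exact this.measurable

-- KEY machinery
lemma key_piece (F : ℝ → ℝ → ℝ) (j : ℕ) :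
    ∫ x in ((j:ℝ)/4)..(((j:ℝ)+1)/4), F x (Int.fract (4*x))
      = (4:ℝ)⁻¹ • ∫ u in (0:ℝ)..1, F ((u + (j:ℝ))/4) u := by
  have hle : ((j:ℝ)/4) ≤ (((j:ℝ)+1)/4) := by
    have : (0:ℝ) ≤ (j:ℝ) := Nat.cast_nonneg j
    linarith
  have hcong : (∫ x in ((j:ℝ)/4)..(((j:ℝ)+1)/4), F x (Int.fract (4*x)))
      = ∫ x in ((j:ℝ)/4)..(((j:ℝ)+1)/4), (fun u => F ((u + (j:ℝ))/4) u) ((4:ℝ)*x + -(j:ℝ)) := by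
    apply intervalIntegral.integral_congr_ae
    have hne : ∀ᵐ x : ℝ ∂volume, x ≠ ((j:ℝ)+1)/4 := by
      rw [Filter.eventually_iff, mem_ae_iff]
      have : {x : ℝ | x ≠ ((j:ℝ)+1)/4}ᶜ = {(((j:ℝ)+1)/4)} := by
        ext x; simp
      rw [this]
      exact Real.volume_singleton
    filter_upwards [hne] with x hx hmem
    rw [Set.uIoc_of_le hle] at hmem
    obtain ⟨hlt, hle2⟩ := hmem
    have hlt2 : x < ((j:ℝ)+1)/4 := lt_of_le_of_ne hle2 hx
    have hfl : ⌊(4:ℝ)*x⌋ = (j:ℤ) := by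
      rw [Int.floor_eq_iff]
      constructor
      · push_cast; linarith
      · push_cast; linarith
    have hfr : Int.fract ((4:ℝ)*x) = 4*x - (j:ℝ) := by
      rw [← Int.self_sub_floor, hfl]; push_cast; ring
    rw [hfr]
    show F x (4*x - (j:ℝ)) = F ((4*x + -(j:ℝ) + (j:ℝ))/4) (4*x + -(j:ℝ))
    congr 1 <;> ring
  rw [hcong, intervalIntegral.integral_comp_mul_add (fun u => F ((u + (j:ℝ))/4) u)
    (by norm_num : (4:ℝ) ≠ 0) (-(j:ℝ))]
  have h0 : (4:ℝ) * ((j:ℝ)/4) + -(j:ℝ) = 0 := by ring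
  have h1 : (4:ℝ) * (((j:ℝ)+1)/4) + -(j:ℝ) = 1 := by ring
  rw [h0, h1]

lemma interval_eq_I01 (f : ℝ → ℝ) : (∫ x in (0:ℝ)..1, f x) = ∫ x in I01, f x := by
  rw [intervalIntegral.integral_of_le zero_le_one]
  show (∫ x in Ioc (0:ℝ) 1, f x) = ∫ x in Icc (0:ℝ) 1, f x
  exact (integral_Icc_eq_integral_Ioc).symm

lemma key {C : ℝ} (F : ℝ → ℝ → ℝ) (hF : Measurable (Function.uncurry F)) (hFb : ∀ x y, |F x y| ≤ C) :
    ∫ x in I01, F x (Int.fract (4*x))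
      = (1/4:ℝ) * ((∫ u in I01, F (u/4) u) + (∫ u in I01, F ((u+1)/4) u)
        + (∫ u in I01, F ((u+2)/4) u) + (∫ u in I01, F ((u+3)/4) u)) := by
  have hmeas : Measurable fun x => F x (Int.fract (4*x)) :=
    hF.comp (measurable_id.prodMk (measurable_fract.comp (measurable_id.const_mul 4)))
  have hii : ∀ a b : ℝ, IntervalIntegrable (fun x => F x (Int.fract (4*x))) volume a b := by
    intro a b
    rw [intervalIntegrable_iff]
    refine integrableOn_of_bdd hmeas (fun x => hFb _ _) ?_
    rw [Set.uIoc]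
    simp [Real.volume_Ioc]
  have A : (∫ x in (0:ℝ)..1, F x (Int.fract (4*x)))
      = (∫ x in (0:ℝ)..(1/4:ℝ), F x (Int.fract (4*x))) + ∫ x in (1/4:ℝ)..(1:ℝ), F x (Int.fract (4*x)) :=
    (intervalIntegral.integral_add_adjacent_intervals (hii 0 (1/4)) (hii (1/4) 1)).symm
  have B : (∫ x in (1/4:ℝ)..(1:ℝ), F x (Int.fract (4*x)))
      = (∫ x in (1/4:ℝ)..(1/2:ℝ), F x (Int.fract (4*x))) + ∫ x in (1/2:ℝ)..(1:ℝ), F x (Int.fract (4*x)) :=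
    (intervalIntegral.integral_add_adjacent_intervals (hii (1/4) (1/2)) (hii (1/2) 1)).symm
  have C2 : (∫ x in (1/2:ℝ)..(1:ℝ), F x (Int.fract (4*x)))
      = (∫ x in (1/2:ℝ)..(3/4:ℝ), F x (Int.fract (4*x))) + ∫ x in (3/4:ℝ)..(1:ℝ), F x (Int.fract (4*x)) :=
    (intervalIntegral.integral_add_adjacent_intervals (hii (1/2) (3/4)) (hii (3/4) 1)).symm
  have p0 := key_piece F 0
  have p1 := key_piece F 1
  have p2 := key_piece F 2
  have p3 := key_piece F 3
  norm_num at p0 p1 p2 p3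
  rw [← interval_eq_I01, A, B, C2, p0, p1, p2, p3]
  rw [interval_eq_I01, interval_eq_I01, interval_eq_I01, interval_eq_I01]
  ring
-- ## push and oscillation lemmas

lemma push {C : ℝ} {Θ : ℝ → ℝ} (hm : Measurable Θ) (hb : ∀ x, |Θ x| ≤ C) :
    (∫ x in I01, Θ (Int.fract (4*x))) = ∫ u in I01, Θ u := by
  calc (∫ x in I01, Θ (Int.fract (4*x)))
      = (1/4:ℝ) * ((∫ u in I01, Θ u) + (∫ u in I01, Θ u)
        + (∫ u in I01, Θ u) + (∫ u in I01, Θ u)) :=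
        key (fun _ u => Θ u) (hm.comp measurable_snd) (fun _ y => hb y)
    _ = ∫ u in I01, Θ u := by ring

lemma cos_bdd_mul {C : ℝ} {Θ : ℝ → ℝ} (hb : ∀ x, |Θ x| ≤ C) (a y : ℝ) :
    |Real.cos a * Θ y| ≤ C := by
  rw [abs_mul]
  calc |Real.cos a| * |Θ y| ≤ 1 * |Θ y| :=
        mul_le_mul_of_nonneg_right (Real.abs_cos_le_one a) (abs_nonneg _)
    _ = |Θ y| := one_mul _
    _ ≤ C := hb y

lemma int_cong (f g : ℝ → ℝ) (h : ∀ u, f u = g u) :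
    (∫ u in I01, f u) = ∫ u in I01, g u :=
  setIntegral_congr_fun measurableSet_I01 (fun u _ => h u)

lemma osc1 {C : ℝ} (c : ℝ) {Θ : ℝ → ℝ} (hm : Measurable Θ) (hb : ∀ x, |Θ x| ≤ C) :
    (∫ x in I01, Real.cos (2*π*x + c) * Θ (Int.fract (4*x))) = 0 := by
  have hg : Measurable fun a : ℝ => 2*π*a + c := by fun_prop
  have hcos : Measurable fun a : ℝ => Real.cos (2*π*a + c) := Real.measurable_cos.comp hg
  have hF : Measurable (Function.uncurry fun x u => Real.cos (2*π*x + c) * Θ u) := by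
    have h2 : Measurable fun p : ℝ × ℝ => Real.cos (2*π*p.1 + c) * Θ p.2 :=
      (hcos.comp measurable_fst).mul (hm.comp measurable_snd)
    exact h2
  calc (∫ x in I01, Real.cos (2*π*x + c) * Θ (Int.fract (4*x)))
      = (1/4:ℝ) * ((∫ u in I01, Real.cos (2*π*(u/4) + c) * Θ u)
        + (∫ u in I01, Real.cos (2*π*((u+1)/4) + c) * Θ u)
        + (∫ u in I01, Real.cos (2*π*((u+2)/4) + c) * Θ u)
        + (∫ u in I01, Real.cos (2*π*((u+3)/4) + c) * Θ u)) :=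
        key (fun x u => Real.cos (2*π*x + c) * Θ u) hF (fun x y => cos_bdd_mul hb _ _)
    _ = 0 := by
        have h0 : (∫ u in I01, Real.cos (2*π*(u/4) + c) * Θ u)
            = ∫ u in I01, Real.cos (π*u/2 + c) * Θ u := by
          refine int_cong _ _ (fun u => ?_)
          rw [show 2*π*(u/4) + c = π*u/2 + c by ring]
        have h1 : (∫ u in I01, Real.cos (2*π*((u+1)/4) + c) * Θ u)
            = - ∫ u in I01, Real.sin (π*u/2 + c) * Θ u := by
          rw [int_cong _ (fun u => -(Real.sin (π*u/2 + c) * Θ u)) (fun u => by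
            rw [show 2*π*((u+1)/4) + c = (π*u/2 + c) + π/2 by ring, Real.cos_add_pi_div_two]
            ring), integral_neg]
        have h2 : (∫ u in I01, Real.cos (2*π*((u+2)/4) + c) * Θ u)
            = - ∫ u in I01, Real.cos (π*u/2 + c) * Θ u := by
          rw [int_cong _ (fun u => -(Real.cos (π*u/2 + c) * Θ u)) (fun u => by
            rw [show 2*π*((u+2)/4) + c = (π*u/2 + c) + π by ring, Real.cos_add_pi]
            ring), integral_neg]
        have h3 : (∫ u in I01, Real.cos (2*π*((u+3)/4) + c) * Θ u)
            = ∫ u in I01, Real.sin (π*u/2 + c) * Θ u := by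
          refine int_cong _ _ (fun u => ?_)
          rw [show 2*π*((u+3)/4) + c = ((π*u/2 + c) + π/2) + π by ring, Real.cos_add_pi,
            Real.cos_add_pi_div_two]
          ring
        rw [h0, h1, h2, h3]
        ring

lemma osc2 {C : ℝ} (c : ℝ) {Θ : ℝ → ℝ} (hm : Measurable Θ) (hb : ∀ x, |Θ x| ≤ C) :
    (∫ x in I01, Real.cos (4*π*x + c) * Θ (Int.fract (4*x))) = 0 := by
  have hg : Measurable fun a : ℝ => 4*π*a + c := by fun_prop
  have hcos : Measurable fun a : ℝ => Real.cos (4*π*a + c) := Real.measurable_cos.comp hg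
  have hF : Measurable (Function.uncurry fun x u => Real.cos (4*π*x + c) * Θ u) := by
    have h2 : Measurable fun p : ℝ × ℝ => Real.cos (4*π*p.1 + c) * Θ p.2 :=
      (hcos.comp measurable_fst).mul (hm.comp measurable_snd)
    exact h2
  calc (∫ x in I01, Real.cos (4*π*x + c) * Θ (Int.fract (4*x)))
      = (1/4:ℝ) * ((∫ u in I01, Real.cos (4*π*(u/4) + c) * Θ u)
        + (∫ u in I01, Real.cos (4*π*((u+1)/4) + c) * Θ u)
        + (∫ u in I01, Real.cos (4*π*((u+2)/4) + c) * Θ u)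
        + (∫ u in I01, Real.cos (4*π*((u+3)/4) + c) * Θ u)) :=
        key (fun x u => Real.cos (4*π*x + c) * Θ u) hF (fun x y => cos_bdd_mul hb _ _)
    _ = 0 := by
        have h0 : (∫ u in I01, Real.cos (4*π*(u/4) + c) * Θ u)
            = ∫ u in I01, Real.cos (π*u + c) * Θ u := by
          refine int_cong _ _ (fun u => ?_)
          rw [show 4*π*(u/4) + c = π*u + c by ring]
        have h1 : (∫ u in I01, Real.cos (4*π*((u+1)/4) + c) * Θ u)
            = - ∫ u in I01, Real.cos (π*u + c) * Θ u := by
          rw [int_cong _ (fun u => -(Real.cos (π*u + c) * Θ u)) (fun u => by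
            rw [show 4*π*((u+1)/4) + c = (π*u + c) + π by ring, Real.cos_add_pi]
            ring), integral_neg]
        have h2 : (∫ u in I01, Real.cos (4*π*((u+2)/4) + c) * Θ u)
            = ∫ u in I01, Real.cos (π*u + c) * Θ u := by
          refine int_cong _ _ (fun u => ?_)
          rw [show 4*π*((u+2)/4) + c = ((π*u + c) + π) + π by ring, Real.cos_add_pi,
            Real.cos_add_pi]
          ring
        have h3 : (∫ u in I01, Real.cos (4*π*((u+3)/4) + c) * Θ u)
            = - ∫ u in I01, Real.cos (π*u + c) * Θ u := by
          rw [int_cong _ (fun u => -(Real.cos (π*u + c) * Θ u)) (fun u => by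
            rw [show 4*π*((u+3)/4) + c = (((π*u + c) + π) + π) + π by ring, Real.cos_add_pi,
              Real.cos_add_pi, Real.cos_add_pi]
            ring), integral_neg]
        rw [h0, h1, h2, h3]
        ring
-- ## the construction: pullback and oscillating perturbation

def fr4 (x : ℝ) : ℝ := Int.fract (4*x)

lemma meas_fr4 : Measurable fr4 := measurable_fract.comp (measurable_id.const_mul 4)

def pb (G : ℝ → ℝ → ℝ) : ℝ → ℝ → ℝ := fun x y => G (fr4 x) (fr4 y)

def mk2 (G : ℝ → ℝ → ℝ) : ℝ → ℝ → ℝ := fun u v => G u v * (1 - G u v)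

def del (G : ℝ → ℝ → ℝ) : ℝ → ℝ → ℝ :=
  fun x y => Real.cos (2*π*(x+y)) * mk2 G (fr4 x) (fr4 y)

def gp (G : ℝ → ℝ → ℝ) : ℝ → ℝ → ℝ := fun x y => pb G x y + del G x y

def cnv (f g : ℝ → ℝ → ℝ) : ℝ → ℝ → ℝ := fun u v => ∫ w in I01, f u w * g w v

lemma graphon_abs {G : ℝ → ℝ → ℝ} (hG : IsGraphon G) : ∀ x y, |G x y| ≤ 1 := by
  intro x y
  have h := hG.2.2 x y
  rw [abs_le]
  exact ⟨by linarith [h.1], h.2⟩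

lemma mk2_nonneg {G : ℝ → ℝ → ℝ} (hG : IsGraphon G) (u v : ℝ) : 0 ≤ mk2 G u v := by
  have h := hG.2.2 u v
  have := h.1; have := h.2
  unfold mk2; nlinarith

lemma mk2_le {G : ℝ → ℝ → ℝ} (hG : IsGraphon G) (u v : ℝ) : mk2 G u v ≤ 1/4 := by
  have h := hG.2.2 u v
  have := h.1; have := h.2
  unfold mk2; nlinarith [sq_nonneg (1 - 2*G u v)]

lemma mk2_abs {G : ℝ → ℝ → ℝ} (hG : IsGraphon G) (u v : ℝ) : |mk2 G u v| ≤ 1 := by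
  rw [abs_le]
  constructor
  · linarith [mk2_nonneg hG u v]
  · linarith [mk2_le hG u v]

lemma mk2_meas {G : ℝ → ℝ → ℝ} (hG : IsGraphon G) : Measurable (Function.uncurry (mk2 G)) := by
  have : Measurable fun p : ℝ × ℝ => G p.1 p.2 * (1 - G p.1 p.2) :=
    hG.1.mul (measurable_const.sub hG.1)
  exact this

lemma pb_meas {G : ℝ → ℝ → ℝ} (hG : IsGraphon G) : Measurable (Function.uncurry (pb G)) := by
  have : Measurable fun p : ℝ × ℝ => G (fr4 p.1) (fr4 p.2) :=
    hG.1.comp ((meas_fr4.comp measurable_fst).prodMk (meas_fr4.comp measurable_snd))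
  exact this

lemma isGraphon_pb {G : ℝ → ℝ → ℝ} (hG : IsGraphon G) : IsGraphon (pb G) :=
  ⟨pb_meas hG, fun x y => hG.2.1 _ _, fun x y => hG.2.2 _ _⟩

lemma del_meas {G : ℝ → ℝ → ℝ} (hG : IsGraphon G) : Measurable (Function.uncurry (del G)) := by
  have h1 : Measurable fun p : ℝ × ℝ => Real.cos (2*π*(p.1+p.2)) :=
    Real.measurable_cos.comp (by fun_prop)
  have h2 : Measurable fun p : ℝ × ℝ => mk2 G (fr4 p.1) (fr4 p.2) :=
    (mk2_meas hG).comp ((meas_fr4.comp measurable_fst).prodMk (meas_fr4.comp measurable_snd))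
  exact h1.mul h2

lemma isGraphon_gp {G : ℝ → ℝ → ℝ} (hG : IsGraphon G) : IsGraphon (gp G) := by
  refine ⟨?_, ?_, ?_⟩
  · have : Measurable fun p : ℝ × ℝ => Function.uncurry (pb G) p + Function.uncurry (del G) p :=
      (pb_meas hG).add (del_meas hG)
    exact this
  · intro x y
    unfold gp pb del mk2
    rw [hG.2.1 (fr4 x) (fr4 y), show x + y = y + x from add_comm x y]
  · intro x y
    have hv := hG.2.2 (fr4 x) (fr4 y)
    have hc := Real.neg_one_le_cos (2*π*(x+y))
    have hc' := Real.cos_le_one (2*π*(x+y))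
    have h1 := hv.1; have h2 := hv.2
    have hm0 : 0 ≤ G (fr4 x) (fr4 y) * (1 - G (fr4 x) (fr4 y)) := mul_nonneg h1 (by linarith)
    constructor
    · have : gp G x y = G (fr4 x) (fr4 y) + Real.cos (2*π*(x+y)) * mk2 G (fr4 x) (fr4 y) := rfl
      rw [this]; unfold mk2
      nlinarith [mul_le_mul_of_nonneg_right hc hm0, sq_nonneg (G (fr4 x) (fr4 y))]
    · have : gp G x y = G (fr4 x) (fr4 y) + Real.cos (2*π*(x+y)) * mk2 G (fr4 x) (fr4 y) := rfl
      rw [this]; unfold mk2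
      nlinarith [mul_le_mul_of_nonneg_right hc' hm0, sq_nonneg (1 - G (fr4 x) (fr4 y))]

lemma cnv_meas {f g : ℝ → ℝ → ℝ} (hf : Measurable (Function.uncurry f))
    (hg : Measurable (Function.uncurry g)) : Measurable (Function.uncurry (cnv f g)) := by
  have h : Measurable fun q : (ℝ × ℝ) × ℝ => f q.1.1 q.2 * g q.2 q.1.2 := by
    exact (hf.comp ((measurable_fst.comp measurable_fst).prodMk measurable_snd)).mul
      (hg.comp (measurable_snd.prodMk (measurable_snd.comp measurable_fst)))
  have : StronglyMeasurable fun p : ℝ × ℝ => ∫ w in I01, (fun q : (ℝ × ℝ) × ℝ => f q.1.1 q.2 * g q.2 q.1.2) (p, w) :=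
    h.stronglyMeasurable.integral_prod_right'
  exact this.measurable

lemma cnv_abs {f g : ℝ → ℝ → ℝ} (hf : ∀ x y, |f x y| ≤ 1) (hg : ∀ x y, |g x y| ≤ 1) :
    ∀ u v, |cnv f g u v| ≤ 1 := by
  intro u v
  refine abs_integral_le (fun w => ?_)
  rw [abs_mul]
  calc |f u w| * |g w v| ≤ 1 * 1 :=
        mul_le_mul (hf u w) (hg w v) (abs_nonneg _) zero_le_one
    _ = 1 := one_mul 1

-- inner integral of two-variable function : measurable in the remaining variable
lemma meas_inner2 {f : ℝ → ℝ → ℝ} (hm : Measurable (Function.uncurry f)) :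
    Measurable fun x => ∫ y in I01, f x y := meas_inner hm

lemma abs_inner_le {f : ℝ → ℝ → ℝ} {C : ℝ} (hb : ∀ x y, |f x y| ≤ C) :
    ∀ x, |∫ y in I01, f x y| ≤ C := fun x => abs_integral_le (fun y => hb x y)
-- ## edge and second moment computations

def sq2 (f : ℝ → ℝ → ℝ) : ℝ := ∫ x in I01, ∫ y in I01, f x y * f x y

lemma edge_pb {G : ℝ → ℝ → ℝ} (hG : IsGraphon G) : edgeDensity (pb G) = edgeDensity G := by
  unfold edgeDensity
  calc (∫ x in I01, ∫ y in I01, pb G x y)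
      = ∫ x in I01, (fun u => ∫ v in I01, G u v) (Int.fract (4*x)) := by
        refine int_cong _ _ (fun x => ?_)
        exact push hG.1.of_uncurry_left (fun v => graphon_abs hG _ v)
    _ = ∫ u in I01, ∫ v in I01, G u v :=
        push (meas_inner hG.1) (abs_inner_le (graphon_abs hG))

lemma sq2_pb {G : ℝ → ℝ → ℝ} (hG : IsGraphon G) : sq2 (pb G) = sq2 G := by
  have hm : Measurable (Function.uncurry fun u v => G u v * G u v) := hG.1.mul hG.1
  have hb : ∀ u v, |G u v * G u v| ≤ 1 := by
    intro u v
    rw [abs_mul]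
    exact mul_le_one₀ (graphon_abs hG u v) (abs_nonneg _) (graphon_abs hG u v)
  unfold sq2
  calc (∫ x in I01, ∫ y in I01, pb G x y * pb G x y)
      = ∫ x in I01, (fun u => ∫ v in I01, G u v * G u v) (Int.fract (4*x)) := by
        refine int_cong _ _ (fun x => ?_)
        exact push (hm.of_uncurry_left) (fun v => hb _ v)
    _ = ∫ u in I01, ∫ v in I01, G u v * G u v :=
        push (meas_inner hm) (abs_inner_le hb)

lemma del_int_zero {G : ℝ → ℝ → ℝ} (hG : IsGraphon G) (x : ℝ) :
    (∫ y in I01, del G x y) = 0 := by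
  have hstep : (∫ y in I01, del G x y)
      = ∫ y in I01, Real.cos (2*π*y + 2*π*x) * (fun v => mk2 G (fr4 x) v) (Int.fract (4*y)) := by
    refine int_cong _ _ (fun y => ?_)
    show Real.cos (2*π*(x+y)) * mk2 G (fr4 x) (fr4 y) = _
    rw [show 2*π*(x+y) = 2*π*y + 2*π*x by ring]
    rfl
  rw [hstep]
  exact osc1 (2*π*x) ((mk2_meas hG).of_uncurry_left) (fun v => mk2_abs hG _ v)

lemma del_meas_sec {G : ℝ → ℝ → ℝ} (hG : IsGraphon G) (x : ℝ) :
    Measurable fun y => del G x y := by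
  have : Measurable fun y => Real.cos (2*π*(x+y)) * mk2 G (fr4 x) (fr4 y) :=
    (Real.measurable_cos.comp (by fun_prop)).mul
      (((mk2_meas hG).of_uncurry_left).comp meas_fr4)
  exact this

lemma del_abs {G : ℝ → ℝ → ℝ} (hG : IsGraphon G) (x y : ℝ) : |del G x y| ≤ 1 :=
  cos_bdd_mul (fun v => mk2_abs hG (fr4 x) v) _ _

lemma pb_meas_sec {G : ℝ → ℝ → ℝ} (hG : IsGraphon G) (x : ℝ) :
    Measurable fun y => pb G x y := (hG.1.of_uncurry_left).comp meas_fr4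

lemma edge_gp {G : ℝ → ℝ → ℝ} (hG : IsGraphon G) : edgeDensity (gp G) = edgeDensity G := by
  have hsplit : ∀ x : ℝ, (∫ y in I01, gp G x y) = ∫ y in I01, pb G x y := by
    intro x
    have h1 : (∫ y in I01, gp G x y) = (∫ y in I01, pb G x y) + ∫ y in I01, del G x y :=
      integral_add
        (integrableOn_I01_of_bdd (pb_meas_sec hG x) (fun y => graphon_abs hG _ _))
        (integrableOn_I01_of_bdd (del_meas_sec hG x) (fun y => del_abs hG x y))
    rw [h1, del_int_zero hG x, add_zero]
  have : edgeDensity (gp G) = edgeDensity (pb G) := by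
    unfold edgeDensity
    exact int_cong _ _ hsplit
  rw [this, edge_pb hG]
-- ## second moment of gp

lemma sq2_gp {G : ℝ → ℝ → ℝ} (hG : IsGraphon G) :
    sq2 (gp G) = sq2 G + (1/2) * (∫ u in I01, ∫ v in I01, mk2 G u v * mk2 G u v) := by
  have hGb := graphon_abs hG
  have hMb := mk2_abs hG
  have hMm := mk2_meas hG
  have hppb : ∀ u v : ℝ, |G u v * G u v| ≤ 1 := by
    intro u v; rw [abs_mul]
    exact mul_le_one₀ (hGb u v) (abs_nonneg _) (hGb u v)
  have hmmb : ∀ u v : ℝ, |mk2 G u v * mk2 G u v| ≤ 1 := by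
    intro u v; rw [abs_mul]
    exact mul_le_one₀ (hMb u v) (abs_nonneg _) (hMb u v)
  have step_y : ∀ x : ℝ, (∫ y in I01, gp G x y * gp G x y)
      = (fun u => (∫ v in I01, G u v * G u v)
          + (1/2) * ∫ v in I01, mk2 G u v * mk2 G u v) (Int.fract (4*x)) := by
    intro x
    have mpb := pb_meas_sec hG x
    have mdel := del_meas_sec hG x
    have mmm : Measurable fun y => mk2 G (fr4 x) (fr4 y) :=
      (hMm.of_uncurry_left).comp meas_fr4
    have i1 : IntegrableOn (fun y => pb G x y * pb G x y) I01 :=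
      integrableOn_I01_of_bdd (mpb.mul mpb) (fun y => hppb _ _)
    have i2 : IntegrableOn (fun y => 2 * (pb G x y * del G x y)) I01 := by
      refine integrableOn_I01_of_bdd (C := 2) (measurable_const.mul (mpb.mul mdel)) (fun y => ?_)
      rw [abs_mul, abs_mul]
      have h1 : |(2:ℝ)| = 2 := by norm_num
      rw [h1]
      have : |pb G x y| * |del G x y| ≤ 1 :=
        mul_le_one₀ (hGb _ _) (abs_nonneg _) (del_abs hG x y)
      linarith
    have i3a : IntegrableOn (fun y => (1/2) * (mk2 G (fr4 x) (fr4 y) * mk2 G (fr4 x) (fr4 y))) I01 := by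
      refine integrableOn_I01_of_bdd (C := 1) (measurable_const.mul (mmm.mul mmm)) (fun y => ?_)
      rw [abs_mul]
      have h1 : |(1/2:ℝ)| = 1/2 := by norm_num
      rw [h1]
      have := hmmb (fr4 x) (fr4 y)
      linarith [abs_nonneg (mk2 G (fr4 x) (fr4 y) * mk2 G (fr4 x) (fr4 y))]
    have i3b : IntegrableOn (fun y => Real.cos (4*π*y + 4*π*x)
        * ((1/2) * (mk2 G (fr4 x) (fr4 y) * mk2 G (fr4 x) (fr4 y)))) I01 := by
      refine integrableOn_I01_of_bdd
        ((Real.measurable_cos.comp (by fun_prop)).mul (measurable_const.mul (mmm.mul mmm)))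
        (fun y => cos_bdd_mul (C := 1) (Θ := fun t => (1/2) * (mk2 G (fr4 x) t * mk2 G (fr4 x) t))
          (fun t => by
            rw [abs_mul]
            have h1 : |(1/2:ℝ)| = 1/2 := by norm_num
            rw [h1]
            have := hmmb (fr4 x) t
            linarith [abs_nonneg (mk2 G (fr4 x) t * mk2 G (fr4 x) t)]) _ (fr4 y))
    have irest2 : IntegrableOn (fun y => (1/2) * (mk2 G (fr4 x) (fr4 y) * mk2 G (fr4 x) (fr4 y))
        + Real.cos (4*π*y + 4*π*x) * ((1/2) * (mk2 G (fr4 x) (fr4 y) * mk2 G (fr4 x) (fr4 y)))) I01 :=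
      i3a.add i3b
    have irest : IntegrableOn (fun y => 2 * (pb G x y * del G x y)
        + ((1/2) * (mk2 G (fr4 x) (fr4 y) * mk2 G (fr4 x) (fr4 y))
          + Real.cos (4*π*y + 4*π*x) * ((1/2) * (mk2 G (fr4 x) (fr4 y) * mk2 G (fr4 x) (fr4 y))))) I01 :=
      i2.add irest2
    calc (∫ y in I01, gp G x y * gp G x y)
        = ∫ y in I01, (pb G x y * pb G x y
            + (2 * (pb G x y * del G x y)
              + ((1/2) * (mk2 G (fr4 x) (fr4 y) * mk2 G (fr4 x) (fr4 y))
                + Real.cos (4*π*y + 4*π*x) * ((1/2) * (mk2 G (fr4 x) (fr4 y) * mk2 G (fr4 x) (fr4 y)))))) := by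
          refine int_cong _ _ (fun y => ?_)
          show (pb G x y + del G x y) * (pb G x y + del G x y) = _
          have hc : Real.cos (2*π*(x+y)) * Real.cos (2*π*(x+y))
              = 1/2 + Real.cos (4*π*y + 4*π*x)/2 := by
            have h := Real.cos_sq (2*π*(x+y))
            rw [sq] at h
            rw [h, show 2*(2*π*(x+y)) = 4*π*y + 4*π*x by ring]
          have hdel : del G x y = Real.cos (2*π*(x+y)) * mk2 G (fr4 x) (fr4 y) := rfl
          rw [hdel]
          linear_combination (mk2 G (fr4 x) (fr4 y) * mk2 G (fr4 x) (fr4 y)) * hc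
            + (2 * pb G x y * mk2 G (fr4 x) (fr4 y) + mk2 G (fr4 x) (fr4 y) * mk2 G (fr4 x) (fr4 y) * Real.cos (2*π*(x+y))) * (0:ℝ)
      _ = (∫ y in I01, pb G x y * pb G x y)
          + ∫ y in I01, (2 * (pb G x y * del G x y)
              + ((1/2) * (mk2 G (fr4 x) (fr4 y) * mk2 G (fr4 x) (fr4 y))
                + Real.cos (4*π*y + 4*π*x) * ((1/2) * (mk2 G (fr4 x) (fr4 y) * mk2 G (fr4 x) (fr4 y))))) :=
          integral_add i1 irest
      _ = (∫ y in I01, pb G x y * pb G x y)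
          + ((∫ y in I01, 2 * (pb G x y * del G x y))
            + ∫ y in I01, ((1/2) * (mk2 G (fr4 x) (fr4 y) * mk2 G (fr4 x) (fr4 y))
                + Real.cos (4*π*y + 4*π*x) * ((1/2) * (mk2 G (fr4 x) (fr4 y) * mk2 G (fr4 x) (fr4 y))))) := by
          rw [integral_add i2 irest2]
      _ = (∫ y in I01, pb G x y * pb G x y)
          + ((∫ y in I01, 2 * (pb G x y * del G x y))
            + ((∫ y in I01, (1/2) * (mk2 G (fr4 x) (fr4 y) * mk2 G (fr4 x) (fr4 y)))
              + ∫ y in I01, Real.cos (4*π*y + 4*π*x) * ((1/2) * (mk2 G (fr4 x) (fr4 y) * mk2 G (fr4 x) (fr4 y))))) := by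
          rw [integral_add i3a i3b]
      _ = (fun u => (∫ v in I01, G u v * G u v)
          + (1/2) * ∫ v in I01, mk2 G u v * mk2 G u v) (Int.fract (4*x)) := by
          have e1 : (∫ y in I01, pb G x y * pb G x y)
              = ∫ v in I01, G (fr4 x) v * G (fr4 x) v :=
            push ((hG.1.of_uncurry_left).mul (hG.1.of_uncurry_left)) (fun v => hppb _ v)
          have e2 : (∫ y in I01, 2 * (pb G x y * del G x y)) = 0 := by
            have hcong : (∫ y in I01, 2 * (pb G x y * del G x y))
                = ∫ y in I01, Real.cos (2*π*y + 2*π*x)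
                  * ((fun t => 2 * (G (fr4 x) t * mk2 G (fr4 x) t)) (Int.fract (4*y))) := by
              refine int_cong _ _ (fun y => ?_)
              show 2 * (pb G x y * (Real.cos (2*π*(x+y)) * mk2 G (fr4 x) (fr4 y))) = _
              rw [show 2*π*(x+y) = 2*π*y + 2*π*x by ring]
              show _ = Real.cos (2*π*y + 2*π*x) * (2 * (G (fr4 x) (fr4 y) * mk2 G (fr4 x) (fr4 y)))
              have : pb G x y = G (fr4 x) (fr4 y) := rfl
              rw [this]; ring
            rw [hcong]
            refine osc1 (C := 2) (2*π*x) (measurable_const.mul ((hG.1.of_uncurry_left).mul (hMm.of_uncurry_left))) (fun t => ?_)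
            simp only [Pi.mul_apply]; rw [abs_mul]
            have h1 : |(2:ℝ)| = 2 := by norm_num
            rw [h1]
            have : |G (fr4 x) t * mk2 G (fr4 x) t| ≤ 1 := by
              rw [abs_mul]
              exact mul_le_one₀ (hGb _ _) (abs_nonneg _) (hMb _ _)
            linarith
          have e3 : (∫ y in I01, (1/2) * (mk2 G (fr4 x) (fr4 y) * mk2 G (fr4 x) (fr4 y)))
              = (1/2) * ∫ v in I01, mk2 G (fr4 x) v * mk2 G (fr4 x) v := by
            rw [integral_const_mul]
            congr 1
            exact push ((hMm.of_uncurry_left).mul (hMm.of_uncurry_left)) (fun v => hmmb _ v)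
          have e4 : (∫ y in I01, Real.cos (4*π*y + 4*π*x)
              * ((1/2) * (mk2 G (fr4 x) (fr4 y) * mk2 G (fr4 x) (fr4 y)))) = 0 := by
            refine osc2 (C := 1) (4*π*x)
              (measurable_const.mul ((hMm.of_uncurry_left).mul (hMm.of_uncurry_left))) (fun t => ?_)
            simp only [Pi.mul_apply]; rw [abs_mul]
            have h1 : |(1/2:ℝ)| = 1/2 := by norm_num
            rw [h1]
            have := hmmb (fr4 x) t
            linarith [abs_nonneg (mk2 G (fr4 x) t * mk2 G (fr4 x) t)]
          rw [e1, e2, e3, e4]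
          show _ = (∫ v in I01, G (fr4 x) v * G (fr4 x) v)
            + (1/2) * ∫ v in I01, mk2 G (fr4 x) v * mk2 G (fr4 x) v
          ring
  have outer : sq2 (gp G) = ∫ u in I01, ((∫ v in I01, G u v * G u v)
      + (1/2) * ∫ v in I01, mk2 G u v * mk2 G u v) := by
    unfold sq2
    rw [int_cong _ _ step_y]
    have hmo : Measurable fun u => (∫ v in I01, G u v * G u v)
        + (1/2) * ∫ v in I01, mk2 G u v * mk2 G u v :=
      (meas_inner (f := fun u v => G u v * G u v) (hG.1.mul hG.1)).add
        (measurable_const.mul (meas_inner (f := fun u v => mk2 G u v * mk2 G u v) (hMm.mul hMm)))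
    have hbo : ∀ u, |(∫ v in I01, G u v * G u v)
        + (1/2) * ∫ v in I01, mk2 G u v * mk2 G u v| ≤ 2 := by
      intro u
      have h1 := abs_inner_le hppb u
      have h2 := abs_inner_le hmmb u
      have := abs_add_le ((∫ v in I01, G u v * G u v)) ((1/2) * ∫ v in I01, mk2 G u v * mk2 G u v)
      rw [abs_mul] at this
      have h3 : |(1/2:ℝ)| = 1/2 := by norm_num
      rw [h3] at this
      linarith
    exact push (C := 2) (Θ := fun u => (∫ v in I01, G u v * G u v)
      + (1/2) * ∫ v in I01, mk2 G u v * mk2 G u v) hmo hbo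
  rw [outer]
  have iE2 : IntegrableOn (fun u => ∫ v in I01, G u v * G u v) I01 :=
    integrableOn_I01_of_bdd (meas_inner (f := fun u v => G u v * G u v) (hG.1.mul hG.1)) (abs_inner_le hppb)
  have iQ2 : IntegrableOn (fun u => (1/2) * ∫ v in I01, mk2 G u v * mk2 G u v) I01 := by
    refine integrableOn_I01_of_bdd (C := 1) (measurable_const.mul (meas_inner (f := fun u v => mk2 G u v * mk2 G u v) (hMm.mul hMm))) (fun u => ?_)
    rw [abs_mul]
    have h3 : |(1/2:ℝ)| = 1/2 := by norm_num
    rw [h3]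
    have := abs_inner_le hmmb u
    linarith [abs_nonneg (∫ v in I01, mk2 G u v * mk2 G u v)]
  rw [integral_add iE2 iQ2, integral_const_mul]
  rfl


-- ## triangle density computations

lemma coscos (A B : ℝ) :
    Real.cos A * Real.cos B = (Real.cos (A+B) + Real.cos (A-B))/2 := by
  rw [Real.cos_add, Real.cos_sub]; ring

lemma abs_mul_le_one {a b : ℝ} (ha : |a| ≤ 1) (hb : |b| ≤ 1) : |a * b| ≤ 1 := by
  rw [abs_mul]
  exact mul_le_one₀ ha (abs_nonneg _) hb

lemma abs_half_mul {a : ℝ} (ha : |a| ≤ 1) (c : ℝ) (hc : 0 ≤ c) (hc1 : c ≤ 1) : |c * a| ≤ 1 := by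
  rw [abs_mul, abs_of_nonneg hc]
  calc c * |a| ≤ 1 * 1 := mul_le_mul hc1 ha (abs_nonneg _) zero_le_one
    _ = 1 := one_mul 1

lemma tri_base {G : ℝ → ℝ → ℝ} (hG : IsGraphon G) :
    triDensity G = ∫ u in I01, ∫ v in I01, G u v * cnv G G v u := by
  unfold triDensity
  refine int_cong _ _ (fun x => int_cong _ _ (fun y => ?_))
  calc (∫ z in I01, G x y * G y z * G z x)
      = ∫ z in I01, G x y * (G y z * G z x) := int_cong _ _ (fun z => by ring)
    _ = G x y * ∫ z in I01, G y z * G z x := integral_const_mul _ _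
    _ = G x y * cnv G G y x := rfl

lemma tri_pb {G : ℝ → ℝ → ℝ} (hG : IsGraphon G) : triDensity (pb G) = triDensity G := by
  have hGb := graphon_abs hG
  have hRm := cnv_meas hG.1 hG.1
  have hRb := cnv_abs hGb hGb
  have hz : ∀ x y : ℝ, (∫ z in I01, pb G x y * pb G y z * pb G z x)
      = pb G x y * cnv G G (fr4 y) (fr4 x) := by
    intro x y
    calc (∫ z in I01, pb G x y * pb G y z * pb G z x)
        = ∫ z in I01, pb G x y * (pb G y z * pb G z x) := int_cong _ _ (fun z => by ring)
      _ = pb G x y * ∫ z in I01, pb G y z * pb G z x := integral_const_mul _ _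
      _ = pb G x y * cnv G G (fr4 y) (fr4 x) := by
          congr 1
          exact push (hG.1.of_uncurry_left.mul hG.1.of_uncurry_right)
            (fun w => abs_mul_le_one (hGb _ w) (hGb w _))
  have hy : ∀ x : ℝ, (∫ y in I01, ∫ z in I01, pb G x y * pb G y z * pb G z x)
      = (fun u => ∫ v in I01, G u v * cnv G G v u) (Int.fract (4*x)) := by
    intro x
    rw [int_cong _ _ (hz x)]
    exact push (hG.1.of_uncurry_left.mul hRm.of_uncurry_right)
      (fun v => abs_mul_le_one (hGb _ v) (hRb v _))
  unfold triDensity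
  rw [int_cong _ _ hy]
  exact (push (meas_inner (f := fun u v => G u v * cnv G G v u)
      (hG.1.mul (hRm.comp measurable_swap)))
    (abs_inner_le (fun u v => abs_mul_le_one (hGb u v) (hRb v u)))).trans (tri_base hG).symm

lemma tri_z {G : ℝ → ℝ → ℝ} (hG : IsGraphon G) (x y : ℝ) :
    (∫ z in I01, gp G y z * gp G z x)
      = cnv G G (fr4 y) (fr4 x)
        + Real.cos (2*π*y - 2*π*x) * ((1/2) * cnv (mk2 G) (mk2 G) (fr4 y) (fr4 x)) := by
  have hGb := graphon_abs hG
  have hMb := mk2_abs hG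
  have hMm := mk2_meas hG
  have mGy : Measurable fun w => G (fr4 y) w := hG.1.of_uncurry_left
  have mGx : Measurable fun w => G w (fr4 x) := hG.1.of_uncurry_right
  have mMy : Measurable fun w => mk2 G (fr4 y) w := hMm.of_uncurry_left
  have mMx : Measurable fun w => mk2 G w (fr4 x) := hMm.of_uncurry_right
  have it1 : IntegrableOn (fun z => G (fr4 y) (fr4 z) * G (fr4 z) (fr4 x)) I01 :=
    integrableOn_I01_of_bdd ((mGy.comp meas_fr4).mul (mGx.comp meas_fr4))
      (fun z => abs_mul_le_one (hGb _ _) (hGb _ _))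
  have it2 : IntegrableOn (fun z => Real.cos (2*π*z + 2*π*x)
      * (G (fr4 y) (fr4 z) * mk2 G (fr4 z) (fr4 x))) I01 :=
    integrableOn_I01_of_bdd ((Real.measurable_cos.comp (by fun_prop)).mul
        (((mGy.comp meas_fr4)).mul (mMx.comp meas_fr4)))
      (fun z => cos_bdd_mul (C := 1) (Θ := fun t => G (fr4 y) (fr4 z) * mk2 G (fr4 z) (fr4 x))
        (fun _ => abs_mul_le_one (hGb _ _) (hMb _ _)) _ z)
  have it3 : IntegrableOn (fun z => Real.cos (2*π*z + 2*π*y)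
      * (mk2 G (fr4 y) (fr4 z) * G (fr4 z) (fr4 x))) I01 :=
    integrableOn_I01_of_bdd ((Real.measurable_cos.comp (by fun_prop)).mul
        (((mMy.comp meas_fr4)).mul (mGx.comp meas_fr4)))
      (fun z => cos_bdd_mul (C := 1) (Θ := fun t => mk2 G (fr4 y) (fr4 z) * G (fr4 z) (fr4 x))
        (fun _ => abs_mul_le_one (hMb _ _) (hGb _ _)) _ z)
  have it4a : IntegrableOn (fun z => Real.cos (4*π*z + (2*π*y + 2*π*x))
      * ((1/2) * (mk2 G (fr4 y) (fr4 z) * mk2 G (fr4 z) (fr4 x)))) I01 :=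
    integrableOn_I01_of_bdd ((Real.measurable_cos.comp (by fun_prop)).mul
        (measurable_const.mul (((mMy.comp meas_fr4)).mul (mMx.comp meas_fr4))))
      (fun z => cos_bdd_mul (C := 1)
        (Θ := fun t => (1/2) * (mk2 G (fr4 y) (fr4 z) * mk2 G (fr4 z) (fr4 x)))
        (fun _ => abs_half_mul (abs_mul_le_one (hMb _ _) (hMb _ _)) (1/2) (by norm_num) (by norm_num)) _ z)
  have it4b : IntegrableOn (fun z => Real.cos (2*π*y - 2*π*x)
      * ((1/2) * (mk2 G (fr4 y) (fr4 z) * mk2 G (fr4 z) (fr4 x)))) I01 :=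
    integrableOn_I01_of_bdd (measurable_const.mul
        (measurable_const.mul (((mMy.comp meas_fr4)).mul (mMx.comp meas_fr4))))
      (fun z => cos_bdd_mul (C := 1)
        (Θ := fun t => (1/2) * (mk2 G (fr4 y) (fr4 z) * mk2 G (fr4 z) (fr4 x)))
        (fun _ => abs_half_mul (abs_mul_le_one (hMb _ _) (hMb _ _)) (1/2) (by norm_num) (by norm_num)) _ z)
  have ir2 : IntegrableOn (fun z => Real.cos (4*π*z + (2*π*y + 2*π*x))
      * ((1/2) * (mk2 G (fr4 y) (fr4 z) * mk2 G (fr4 z) (fr4 x)))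
      + Real.cos (2*π*y - 2*π*x) * ((1/2) * (mk2 G (fr4 y) (fr4 z) * mk2 G (fr4 z) (fr4 x)))) I01 :=
    it4a.add it4b
  have ir1 : IntegrableOn (fun z => Real.cos (2*π*z + 2*π*y)
      * (mk2 G (fr4 y) (fr4 z) * G (fr4 z) (fr4 x))
      + (Real.cos (4*π*z + (2*π*y + 2*π*x)) * ((1/2) * (mk2 G (fr4 y) (fr4 z) * mk2 G (fr4 z) (fr4 x)))
        + Real.cos (2*π*y - 2*π*x) * ((1/2) * (mk2 G (fr4 y) (fr4 z) * mk2 G (fr4 z) (fr4 x))))) I01 :=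
    it3.add ir2
  have ir0 : IntegrableOn (fun z => Real.cos (2*π*z + 2*π*x)
      * (G (fr4 y) (fr4 z) * mk2 G (fr4 z) (fr4 x))
      + (Real.cos (2*π*z + 2*π*y) * (mk2 G (fr4 y) (fr4 z) * G (fr4 z) (fr4 x))
        + (Real.cos (4*π*z + (2*π*y + 2*π*x)) * ((1/2) * (mk2 G (fr4 y) (fr4 z) * mk2 G (fr4 z) (fr4 x)))
          + Real.cos (2*π*y - 2*π*x) * ((1/2) * (mk2 G (fr4 y) (fr4 z) * mk2 G (fr4 z) (fr4 x)))))) I01 :=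
    it2.add ir1
  calc (∫ z in I01, gp G y z * gp G z x)
      = ∫ z in I01, (G (fr4 y) (fr4 z) * G (fr4 z) (fr4 x)
        + (Real.cos (2*π*z + 2*π*x) * (G (fr4 y) (fr4 z) * mk2 G (fr4 z) (fr4 x))
          + (Real.cos (2*π*z + 2*π*y) * (mk2 G (fr4 y) (fr4 z) * G (fr4 z) (fr4 x))
            + (Real.cos (4*π*z + (2*π*y + 2*π*x)) * ((1/2) * (mk2 G (fr4 y) (fr4 z) * mk2 G (fr4 z) (fr4 x)))
              + Real.cos (2*π*y - 2*π*x) * ((1/2) * (mk2 G (fr4 y) (fr4 z) * mk2 G (fr4 z) (fr4 x))))))) := by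
        refine int_cong _ _ (fun z => ?_)
        show (G (fr4 y) (fr4 z) + Real.cos (2*π*(y+z)) * mk2 G (fr4 y) (fr4 z))
          * (G (fr4 z) (fr4 x) + Real.cos (2*π*(z+x)) * mk2 G (fr4 z) (fr4 x)) = _
        have e1 : Real.cos (2*π*z + 2*π*x) = Real.cos (2*π*(z+x)) := by
          rw [show 2*π*z + 2*π*x = 2*π*(z+x) by ring]
        have e2 : Real.cos (2*π*z + 2*π*y) = Real.cos (2*π*(y+z)) := by
          rw [show 2*π*z + 2*π*y = 2*π*(y+z) by ring]
        have e3 : Real.cos (2*π*(y+z)) * Real.cos (2*π*(z+x))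
            = (Real.cos (4*π*z + (2*π*y + 2*π*x)) + Real.cos (2*π*y - 2*π*x))/2 := by
          rw [coscos, show 2*π*(y+z) + 2*π*(z+x) = 4*π*z + (2*π*y + 2*π*x) by ring,
            show 2*π*(y+z) - (2*π*(z+x)) = 2*π*y - 2*π*x by ring]
        rw [e1, e2]
        linear_combination (mk2 G (fr4 y) (fr4 z) * mk2 G (fr4 z) (fr4 x)) * e3
    _ = (∫ z in I01, G (fr4 y) (fr4 z) * G (fr4 z) (fr4 x))
        + ((∫ z in I01, Real.cos (2*π*z + 2*π*x) * (G (fr4 y) (fr4 z) * mk2 G (fr4 z) (fr4 x)))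
          + ((∫ z in I01, Real.cos (2*π*z + 2*π*y) * (mk2 G (fr4 y) (fr4 z) * G (fr4 z) (fr4 x)))
            + ((∫ z in I01, Real.cos (4*π*z + (2*π*y + 2*π*x)) * ((1/2) * (mk2 G (fr4 y) (fr4 z) * mk2 G (fr4 z) (fr4 x))))
              + (∫ z in I01, Real.cos (2*π*y - 2*π*x) * ((1/2) * (mk2 G (fr4 y) (fr4 z) * mk2 G (fr4 z) (fr4 x))))))) := by
        rw [integral_add it1 ir0, integral_add it2 ir1, integral_add it3 ir2,
          integral_add it4a it4b]
    _ = cnv G G (fr4 y) (fr4 x)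
        + Real.cos (2*π*y - 2*π*x) * ((1/2) * cnv (mk2 G) (mk2 G) (fr4 y) (fr4 x)) := by
        have v1 : (∫ z in I01, G (fr4 y) (fr4 z) * G (fr4 z) (fr4 x)) = cnv G G (fr4 y) (fr4 x) :=
          push (mGy.mul mGx) (fun w => abs_mul_le_one (hGb _ w) (hGb w _))
        have v2 : (∫ z in I01, Real.cos (2*π*z + 2*π*x)
            * (G (fr4 y) (fr4 z) * mk2 G (fr4 z) (fr4 x))) = 0 :=
          osc1 (C := 1) (2*π*x) (mGy.mul mMx)
            (fun w => abs_mul_le_one (hGb _ w) (hMb w _))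
        have v3 : (∫ z in I01, Real.cos (2*π*z + 2*π*y)
            * (mk2 G (fr4 y) (fr4 z) * G (fr4 z) (fr4 x))) = 0 :=
          osc1 (C := 1) (2*π*y) (mMy.mul mGx)
            (fun w => abs_mul_le_one (hMb _ w) (hGb w _))
        have v4a : (∫ z in I01, Real.cos (4*π*z + (2*π*y + 2*π*x))
            * ((1/2) * (mk2 G (fr4 y) (fr4 z) * mk2 G (fr4 z) (fr4 x)))) = 0 :=
          osc2 (C := 1) (2*π*y + 2*π*x) (measurable_const.mul (mMy.mul mMx))
            (fun w => abs_half_mul (abs_mul_le_one (hMb _ w) (hMb w _)) (1/2) (by norm_num) (by norm_num))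
        have v4b : (∫ z in I01, Real.cos (2*π*y - 2*π*x)
            * ((1/2) * (mk2 G (fr4 y) (fr4 z) * mk2 G (fr4 z) (fr4 x))))
            = Real.cos (2*π*y - 2*π*x) * ((1/2) * cnv (mk2 G) (mk2 G) (fr4 y) (fr4 x)) := by
          rw [integral_const_mul, integral_const_mul]
          congr 2
          exact push (mMy.mul mMx) (fun w => abs_mul_le_one (hMb _ w) (hMb w _))
        rw [v1, v2, v3, v4a, v4b]
        ring
-- ## y-level and full triangle computation for gp

lemma tri_y {G : ℝ → ℝ → ℝ} (hG : IsGraphon G) (x : ℝ) :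
    (∫ y in I01, gp G x y * (cnv G G (fr4 y) (fr4 x)
        + Real.cos (2*π*y - 2*π*x) * ((1/2) * cnv (mk2 G) (mk2 G) (fr4 y) (fr4 x))))
      = (fun u => ∫ v in I01, G u v * cnv G G v u) (Int.fract (4*x))
        + Real.cos (4*π*x) * ((fun u => (1/4) * ∫ v in I01, mk2 G u v * cnv (mk2 G) (mk2 G) v u)
            (Int.fract (4*x))) := by
  have hGb := graphon_abs hG
  have hMb := mk2_abs hG
  have hMm := mk2_meas hG
  have hRm := cnv_meas hG.1 hG.1
  have hRb := cnv_abs hGb hGb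
  have hQm := cnv_meas hMm hMm
  have hQb := cnv_abs hMb hMb
  have mGx : Measurable fun v => G (fr4 x) v := hG.1.of_uncurry_left
  have mMx : Measurable fun v => mk2 G (fr4 x) v := hMm.of_uncurry_left
  have mRx : Measurable fun v => cnv G G v (fr4 x) := hRm.of_uncurry_right
  have mQx : Measurable fun v => cnv (mk2 G) (mk2 G) v (fr4 x) := hQm.of_uncurry_right
  have iu1 : IntegrableOn (fun y => G (fr4 x) (fr4 y) * cnv G G (fr4 y) (fr4 x)) I01 :=
    integrableOn_I01_of_bdd ((mGx.comp meas_fr4).mul (mRx.comp meas_fr4))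
      (fun y => abs_mul_le_one (hGb _ _) (hRb _ _))
  have iu2 : IntegrableOn (fun y => Real.cos (2*π*y + 2*π*x)
      * (mk2 G (fr4 x) (fr4 y) * cnv G G (fr4 y) (fr4 x))) I01 :=
    integrableOn_I01_of_bdd ((Real.measurable_cos.comp (by fun_prop)).mul
        ((mMx.comp meas_fr4).mul (mRx.comp meas_fr4)))
      (fun y => cos_bdd_mul (C := 1)
        (Θ := fun t => mk2 G (fr4 x) (fr4 y) * cnv G G (fr4 y) (fr4 x))
        (fun _ => abs_mul_le_one (hMb _ _) (hRb _ _)) _ y)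
  have iu3 : IntegrableOn (fun y => Real.cos (2*π*y + -(2*π*x))
      * (G (fr4 x) (fr4 y) * ((1/2) * cnv (mk2 G) (mk2 G) (fr4 y) (fr4 x)))) I01 :=
    integrableOn_I01_of_bdd ((Real.measurable_cos.comp (by fun_prop)).mul
        ((mGx.comp meas_fr4).mul (measurable_const.mul (mQx.comp meas_fr4))))
      (fun y => cos_bdd_mul (C := 1)
        (Θ := fun t => G (fr4 x) (fr4 y) * ((1/2) * cnv (mk2 G) (mk2 G) (fr4 y) (fr4 x)))
        (fun _ => abs_mul_le_one (hGb _ _)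
          (abs_half_mul (hQb _ _) (1/2) (by norm_num) (by norm_num))) _ y)
  have iu4a : IntegrableOn (fun y => Real.cos (4*π*y + 0)
      * ((1/4) * (mk2 G (fr4 x) (fr4 y) * cnv (mk2 G) (mk2 G) (fr4 y) (fr4 x)))) I01 :=
    integrableOn_I01_of_bdd ((Real.measurable_cos.comp (by fun_prop)).mul
        (measurable_const.mul ((mMx.comp meas_fr4).mul (mQx.comp meas_fr4))))
      (fun y => cos_bdd_mul (C := 1)
        (Θ := fun t => (1/4) * (mk2 G (fr4 x) (fr4 y) * cnv (mk2 G) (mk2 G) (fr4 y) (fr4 x)))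
        (fun _ => abs_half_mul (abs_mul_le_one (hMb _ _) (hQb _ _)) (1/4) (by norm_num) (by norm_num)) _ y)
  have iu4b : IntegrableOn (fun y => Real.cos (4*π*x)
      * ((1/4) * (mk2 G (fr4 x) (fr4 y) * cnv (mk2 G) (mk2 G) (fr4 y) (fr4 x)))) I01 :=
    integrableOn_I01_of_bdd (measurable_const.mul
        (measurable_const.mul ((mMx.comp meas_fr4).mul (mQx.comp meas_fr4))))
      (fun y => cos_bdd_mul (C := 1)
        (Θ := fun t => (1/4) * (mk2 G (fr4 x) (fr4 y) * cnv (mk2 G) (mk2 G) (fr4 y) (fr4 x)))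
        (fun _ => abs_half_mul (abs_mul_le_one (hMb _ _) (hQb _ _)) (1/4) (by norm_num) (by norm_num)) _ y)
  have ir3 : IntegrableOn (fun y => Real.cos (4*π*y + 0)
      * ((1/4) * (mk2 G (fr4 x) (fr4 y) * cnv (mk2 G) (mk2 G) (fr4 y) (fr4 x)))
      + Real.cos (4*π*x) * ((1/4) * (mk2 G (fr4 x) (fr4 y) * cnv (mk2 G) (mk2 G) (fr4 y) (fr4 x)))) I01 :=
    iu4a.add iu4b
  have ir2 : IntegrableOn (fun y => Real.cos (2*π*y + -(2*π*x))
      * (G (fr4 x) (fr4 y) * ((1/2) * cnv (mk2 G) (mk2 G) (fr4 y) (fr4 x)))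
      + (Real.cos (4*π*y + 0) * ((1/4) * (mk2 G (fr4 x) (fr4 y) * cnv (mk2 G) (mk2 G) (fr4 y) (fr4 x)))
        + Real.cos (4*π*x) * ((1/4) * (mk2 G (fr4 x) (fr4 y) * cnv (mk2 G) (mk2 G) (fr4 y) (fr4 x))))) I01 :=
    iu3.add ir3
  have ir1 : IntegrableOn (fun y => Real.cos (2*π*y + 2*π*x)
      * (mk2 G (fr4 x) (fr4 y) * cnv G G (fr4 y) (fr4 x))
      + (Real.cos (2*π*y + -(2*π*x)) * (G (fr4 x) (fr4 y) * ((1/2) * cnv (mk2 G) (mk2 G) (fr4 y) (fr4 x)))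
        + (Real.cos (4*π*y + 0) * ((1/4) * (mk2 G (fr4 x) (fr4 y) * cnv (mk2 G) (mk2 G) (fr4 y) (fr4 x)))
          + Real.cos (4*π*x) * ((1/4) * (mk2 G (fr4 x) (fr4 y) * cnv (mk2 G) (mk2 G) (fr4 y) (fr4 x)))))) I01 :=
    iu2.add ir2
  calc (∫ y in I01, gp G x y * (cnv G G (fr4 y) (fr4 x)
        + Real.cos (2*π*y - 2*π*x) * ((1/2) * cnv (mk2 G) (mk2 G) (fr4 y) (fr4 x))))
      = ∫ y in I01, (G (fr4 x) (fr4 y) * cnv G G (fr4 y) (fr4 x)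
        + (Real.cos (2*π*y + 2*π*x) * (mk2 G (fr4 x) (fr4 y) * cnv G G (fr4 y) (fr4 x))
          + (Real.cos (2*π*y + -(2*π*x)) * (G (fr4 x) (fr4 y) * ((1/2) * cnv (mk2 G) (mk2 G) (fr4 y) (fr4 x)))
            + (Real.cos (4*π*y + 0) * ((1/4) * (mk2 G (fr4 x) (fr4 y) * cnv (mk2 G) (mk2 G) (fr4 y) (fr4 x)))
              + Real.cos (4*π*x) * ((1/4) * (mk2 G (fr4 x) (fr4 y) * cnv (mk2 G) (mk2 G) (fr4 y) (fr4 x))))))) := by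
        refine int_cong _ _ (fun y => ?_)
        show (G (fr4 x) (fr4 y) + Real.cos (2*π*(x+y)) * mk2 G (fr4 x) (fr4 y))
          * (cnv G G (fr4 y) (fr4 x)
            + Real.cos (2*π*y - 2*π*x) * ((1/2) * cnv (mk2 G) (mk2 G) (fr4 y) (fr4 x))) = _
        have e1 : Real.cos (2*π*y + 2*π*x) = Real.cos (2*π*(x+y)) := by
          rw [show 2*π*y + 2*π*x = 2*π*(x+y) by ring]
        have e2 : Real.cos (2*π*y + -(2*π*x)) = Real.cos (2*π*y - 2*π*x) := by
          rw [show 2*π*y + -(2*π*x) = 2*π*y - 2*π*x by ring]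
        have e3 : Real.cos (2*π*(x+y)) * Real.cos (2*π*y - 2*π*x)
            = (Real.cos (4*π*y + 0) + Real.cos (4*π*x))/2 := by
          rw [coscos, show 2*π*(x+y) + (2*π*y - 2*π*x) = 4*π*y + 0 by ring,
            show 2*π*(x+y) - (2*π*y - 2*π*x) = 4*π*x by ring]
        rw [e1, e2]
        linear_combination ((1/2) * (mk2 G (fr4 x) (fr4 y) * cnv (mk2 G) (mk2 G) (fr4 y) (fr4 x))) * e3
    _ = (∫ y in I01, G (fr4 x) (fr4 y) * cnv G G (fr4 y) (fr4 x))
        + ((∫ y in I01, Real.cos (2*π*y + 2*π*x) * (mk2 G (fr4 x) (fr4 y) * cnv G G (fr4 y) (fr4 x)))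
          + ((∫ y in I01, Real.cos (2*π*y + -(2*π*x)) * (G (fr4 x) (fr4 y) * ((1/2) * cnv (mk2 G) (mk2 G) (fr4 y) (fr4 x))))
            + ((∫ y in I01, Real.cos (4*π*y + 0) * ((1/4) * (mk2 G (fr4 x) (fr4 y) * cnv (mk2 G) (mk2 G) (fr4 y) (fr4 x))))
              + (∫ y in I01, Real.cos (4*π*x) * ((1/4) * (mk2 G (fr4 x) (fr4 y) * cnv (mk2 G) (mk2 G) (fr4 y) (fr4 x))))))) := by
        rw [integral_add iu1 ir1, integral_add iu2 ir2, integral_add iu3 ir3,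
          integral_add iu4a iu4b]
    _ = (fun u => ∫ v in I01, G u v * cnv G G v u) (Int.fract (4*x))
        + Real.cos (4*π*x) * ((fun u => (1/4) * ∫ v in I01, mk2 G u v * cnv (mk2 G) (mk2 G) v u)
            (Int.fract (4*x))) := by
        have w1 : (∫ y in I01, G (fr4 x) (fr4 y) * cnv G G (fr4 y) (fr4 x))
            = ∫ v in I01, G (fr4 x) v * cnv G G v (fr4 x) :=
          push (mGx.mul mRx) (fun v => abs_mul_le_one (hGb _ v) (hRb v _))
        have w2 : (∫ y in I01, Real.cos (2*π*y + 2*π*x)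
            * (mk2 G (fr4 x) (fr4 y) * cnv G G (fr4 y) (fr4 x))) = 0 :=
          osc1 (C := 1) (2*π*x) (mMx.mul mRx)
            (fun v => abs_mul_le_one (hMb _ v) (hRb v _))
        have w3 : (∫ y in I01, Real.cos (2*π*y + -(2*π*x))
            * (G (fr4 x) (fr4 y) * ((1/2) * cnv (mk2 G) (mk2 G) (fr4 y) (fr4 x)))) = 0 :=
          osc1 (C := 1) (-(2*π*x)) (mGx.mul (measurable_const.mul mQx))
            (fun v => abs_mul_le_one (hGb _ v)
              (abs_half_mul (hQb v _) (1/2) (by norm_num) (by norm_num)))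
        have w4a : (∫ y in I01, Real.cos (4*π*y + 0)
            * ((1/4) * (mk2 G (fr4 x) (fr4 y) * cnv (mk2 G) (mk2 G) (fr4 y) (fr4 x)))) = 0 :=
          osc2 (C := 1) 0 (measurable_const.mul (mMx.mul mQx))
            (fun v => abs_half_mul (abs_mul_le_one (hMb _ v) (hQb v _)) (1/4) (by norm_num) (by norm_num))
        have w4b : (∫ y in I01, Real.cos (4*π*x)
            * ((1/4) * (mk2 G (fr4 x) (fr4 y) * cnv (mk2 G) (mk2 G) (fr4 y) (fr4 x))))
            = Real.cos (4*π*x) * ((1/4) * ∫ v in I01, mk2 G (fr4 x) v * cnv (mk2 G) (mk2 G) v (fr4 x)) := by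
          rw [integral_const_mul, integral_const_mul]
          congr 2
          exact push (mMx.mul mQx) (fun v => abs_mul_le_one (hMb _ v) (hQb v _))
        rw [w1, w2, w3, w4a, w4b]
        show (∫ v in I01, G (fr4 x) v * cnv G G v (fr4 x)) + (0 + (0 + (0
            + Real.cos (4*π*x) * ((1/4) * ∫ v in I01, mk2 G (fr4 x) v * cnv (mk2 G) (mk2 G) v (fr4 x)))))
          = (∫ v in I01, G (fr4 x) v * cnv G G v (fr4 x))
            + Real.cos (4*π*x) * ((1/4) * ∫ v in I01, mk2 G (fr4 x) v * cnv (mk2 G) (mk2 G) v (fr4 x))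
        ring

lemma tri_gp {G : ℝ → ℝ → ℝ} (hG : IsGraphon G) : triDensity (gp G) = triDensity G := by
  have hGb := graphon_abs hG
  have hMb := mk2_abs hG
  have hMm := mk2_meas hG
  have hRm := cnv_meas hG.1 hG.1
  have hRb := cnv_abs hGb hGb
  have hQm := cnv_meas hMm hMm
  have hQb := cnv_abs hMb hMb
  have hgpb := graphon_abs (isGraphon_gp hG)
  have hz : ∀ x y : ℝ, (∫ z in I01, gp G x y * gp G y z * gp G z x)
      = gp G x y * (cnv G G (fr4 y) (fr4 x)
        + Real.cos (2*π*y - 2*π*x) * ((1/2) * cnv (mk2 G) (mk2 G) (fr4 y) (fr4 x))) := by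
    intro x y
    calc (∫ z in I01, gp G x y * gp G y z * gp G z x)
        = ∫ z in I01, gp G x y * (gp G y z * gp G z x) := int_cong _ _ (fun z => by ring)
      _ = gp G x y * ∫ z in I01, gp G y z * gp G z x := integral_const_mul _ _
      _ = _ := by rw [tri_z hG x y]
  have hy : ∀ x : ℝ, (∫ y in I01, ∫ z in I01, gp G x y * gp G y z * gp G z x)
      = (fun u => ∫ v in I01, G u v * cnv G G v u) (Int.fract (4*x))
        + Real.cos (4*π*x) * ((fun u => (1/4) * ∫ v in I01, mk2 G u v * cnv (mk2 G) (mk2 G) v u)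
            (Int.fract (4*x))) := by
    intro x
    rw [int_cong _ _ (hz x)]
    exact tri_y hG x
  have mS : Measurable fun u => ∫ v in I01, G u v * cnv G G v u :=
    meas_inner (f := fun u v => G u v * cnv G G v u)
      (hG.1.mul (hRm.comp measurable_swap))
  have bS : ∀ u, |∫ v in I01, G u v * cnv G G v u| ≤ 1 :=
    abs_inner_le (fun u v => abs_mul_le_one (hGb u v) (hRb v u))
  have mW : Measurable fun u => (1/4) * ∫ v in I01, mk2 G u v * cnv (mk2 G) (mk2 G) v u :=
    measurable_const.mul (meas_inner (f := fun u v => mk2 G u v * cnv (mk2 G) (mk2 G) v u)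
      (hMm.mul (hQm.comp measurable_swap)))
  have bW : ∀ u, |(1/4) * ∫ v in I01, mk2 G u v * cnv (mk2 G) (mk2 G) v u| ≤ 1 := by
    intro u
    exact abs_half_mul (abs_inner_le (fun u v => abs_mul_le_one (hMb u v) (hQb v u)) u)
      (1/4) (by norm_num) (by norm_num)
  have iS : IntegrableOn (fun x => (fun u => ∫ v in I01, G u v * cnv G G v u) (Int.fract (4*x))) I01 :=
    integrableOn_I01_of_bdd (mS.comp (meas_fr4))
      (fun x => bS _)
  have iW : IntegrableOn (fun x => Real.cos (4*π*x)
      * ((fun u => (1/4) * ∫ v in I01, mk2 G u v * cnv (mk2 G) (mk2 G) v u) (Int.fract (4*x)))) I01 :=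
    integrableOn_I01_of_bdd ((Real.measurable_cos.comp (by fun_prop)).mul (mW.comp meas_fr4))
      (fun x => cos_bdd_mul (C := 1)
        (Θ := fun u => (1/4) * ∫ v in I01, mk2 G u v * cnv (mk2 G) (mk2 G) v u)
        bW _ (Int.fract (4*x)))
  have split : triDensity (gp G)
      = (∫ x in I01, (fun u => ∫ v in I01, G u v * cnv G G v u) (Int.fract (4*x)))
        + ∫ x in I01, Real.cos (4*π*x)
          * ((fun u => (1/4) * ∫ v in I01, mk2 G u v * cnv (mk2 G) (mk2 G) v u) (Int.fract (4*x))) := by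
    unfold triDensity
    rw [int_cong _ _ hy]
    exact integral_add iS iW
  have key1 : (∫ x in I01, (fun u => ∫ v in I01, G u v * cnv G G v u) (Int.fract (4*x)))
      = triDensity G := (push mS bS).trans (tri_base hG).symm
  have key2 : (∫ x in I01, Real.cos (4*π*x)
      * ((fun u => (1/4) * ∫ v in I01, mk2 G u v * cnv (mk2 G) (mk2 G) v u) (Int.fract (4*x)))) = 0 := by
    have hcong : (∫ x in I01, Real.cos (4*π*x)
        * ((fun u => (1/4) * ∫ v in I01, mk2 G u v * cnv (mk2 G) (mk2 G) v u) (Int.fract (4*x))))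
        = ∫ x in I01, Real.cos (4*π*x + 0)
        * ((fun u => (1/4) * ∫ v in I01, mk2 G u v * cnv (mk2 G) (mk2 G) v u) (Int.fract (4*x))) := by
      refine int_cong _ _ (fun x => ?_)
      rw [show 4*π*x + 0 = 4*π*x by ring]
    rw [hcong]
    exact osc2 (C := 1) 0 mW bW
  rw [split, key1, key2, add_zero]
-- ## invariance of the second moment and the main construction

lemma measure_I01_toReal : (volume I01).toReal = 1 := by simp [I01]

lemma integrable_mu2_of_bdd {F : ℝ × ℝ → ℝ} {C : ℝ} (hm : Measurable F)
    (hb : ∀ p, |F p| ≤ C) : Integrable F μ2 := by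
  have : IsProbabilityMeasure μ2 := by
    unfold μ2; infer_instance
  refine (integrable_const C).mono' hm.aestronglyMeasurable ?_
  exact Filter.Eventually.of_forall fun p => by simpa using hb p

lemma sq2_invariant {g g' : ℝ → ℝ → ℝ} (hg : IsGraphon g) (hg' : IsGraphon g')
    (h : GraphonEquiv g g') : sq2 g' = sq2 g := by
  obtain ⟨φ, _, hmp, hae⟩ := h
  have hgb := graphon_abs hg
  have hgb' := graphon_abs hg'
  have hm' : Measurable fun p : ℝ × ℝ => g' p.1 p.2 * g' p.1 p.2 := hg'.1.mul hg'.1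
  have hm : Measurable fun p : ℝ × ℝ => g p.1 p.2 * g p.1 p.2 := hg.1.mul hg.1
  have hi' : Integrable (fun p : ℝ × ℝ => g' p.1 p.2 * g' p.1 p.2) μ2 :=
    integrable_mu2_of_bdd hm' (fun p => abs_mul_le_one (hgb' _ _) (hgb' _ _))
  have hT : MeasurePreserving (Prod.map φ φ) μ2 μ2 := hmp.prod hmp
  calc sq2 g'
      = ∫ p, g' p.1 p.2 * g' p.1 p.2 ∂μ2 := (integral_prod _ hi').symm
    _ = ∫ p, (fun q : ℝ × ℝ => g q.1 q.2 * g q.1 q.2) (Prod.map φ φ p) ∂μ2 := by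
        refine integral_congr_ae (hae.mono fun p hp => ?_)
        simp only [Prod.map]
        rw [hp]
    _ = ∫ q, g q.1 q.2 * g q.1 q.2 ∂μ2 := by
        have hmap := integral_map (μ := μ2) hT.measurable.aemeasurable
          (f := fun q : ℝ × ℝ => g q.1 q.2 * g q.1 q.2) hm.aestronglyMeasurable
        rw [hT.map_eq] at hmap
        exact hmap.symm
    _ = sq2 g :=
        integral_prod _ (integrable_mu2_of_bdd hm
          (fun p => abs_mul_le_one (hgb _ _) (hgb _ _)))

lemma sq2_mk2_pos {G : ℝ → ℝ → ℝ} (hG : IsGraphon G) {a b : ℝ} (ha : 0 < a) (hb : b < 1)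
    (hab : ∀ x y, a ≤ G x y ∧ G x y ≤ b) :
    (a*(1-b))*(a*(1-b)) ≤ ∫ u in I01, ∫ v in I01, mk2 G u v * mk2 G u v := by
  set m0 := a*(1-b) with hm0
  have hm0pos : 0 < m0 := mul_pos ha (by linarith)
  have hmk : ∀ u v, m0 ≤ mk2 G u v := by
    intro u v
    have h1 := (hab u v).1
    have h2 := (hab u v).2
    have hb1 : 1 - b ≤ 1 - G u v := by linarith
    unfold mk2
    calc m0 = a * (1-b) := hm0
      _ ≤ G u v * (1 - G u v) :=
        mul_le_mul h1 hb1 (by linarith) (by linarith [(hG.2.2 u v).1])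
  have hmksq : ∀ u v, m0 * m0 ≤ mk2 G u v * mk2 G u v := by
    intro u v
    exact mul_le_mul (hmk u v) (hmk u v) (le_of_lt hm0pos) (le_trans (le_of_lt hm0pos) (hmk u v))
  have hMm := mk2_meas hG
  have hMb := mk2_abs hG
  have inner : ∀ u, m0 * m0 ≤ ∫ v in I01, mk2 G u v * mk2 G u v := by
    intro u
    have hint : IntegrableOn (fun v => mk2 G u v * mk2 G u v) I01 :=
      integrableOn_I01_of_bdd ((hMm.of_uncurry_left).mul (hMm.of_uncurry_left))
        (fun v => abs_mul_le_one (hMb u v) (hMb u v))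
    calc m0 * m0 = ∫ _ in I01, m0 * m0 := by
          rw [setIntegral_const, measureReal_def, measure_I01_toReal, one_smul]
      _ ≤ ∫ v in I01, mk2 G u v * mk2 G u v :=
          setIntegral_mono_on (integrableOn_const (by simp [I01]))
            hint measurableSet_I01 (fun v _ => hmksq u v)
  have hint2 : IntegrableOn (fun u => ∫ v in I01, mk2 G u v * mk2 G u v) I01 :=
    integrableOn_I01_of_bdd
      (meas_inner (f := fun u v => mk2 G u v * mk2 G u v) (hMm.mul hMm))
      (abs_inner_le (fun u v => abs_mul_le_one (hMb u v) (hMb u v)))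
  calc m0 * m0 = ∫ _ in I01, m0 * m0 := by
        rw [setIntegral_const, measureReal_def, measure_I01_toReal, one_smul]
    _ ≤ ∫ u in I01, ∫ v in I01, mk2 G u v * mk2 G u v :=
        setIntegral_mono_on (integrableOn_const (by simp [I01]))
          hint2 measurableSet_I01 (fun u _ => inner u)

lemma main_construct {G : ℝ → ℝ → ℝ} (hG : IsGraphon G) {a b : ℝ} (ha : 0 < a) (hb : b < 1)
    (hab : ∀ x y, a ≤ G x y ∧ G x y ≤ b) :
    ∃ g g' : ℝ → ℝ → ℝ, IsGraphon g ∧ IsGraphon g' ∧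
      edgeDensity g = edgeDensity G ∧ edgeDensity g' = edgeDensity G ∧
      triDensity g = triDensity G ∧ triDensity g' = triDensity G ∧ ¬ GraphonEquiv g g' := by
  refine ⟨pb G, gp G, isGraphon_pb hG, isGraphon_gp hG, edge_pb hG, edge_gp hG,
    tri_pb hG, tri_gp hG, ?_⟩
  intro hequiv
  have hinv := sq2_invariant (isGraphon_pb hG) (isGraphon_gp hG) hequiv
  have h1 := sq2_gp hG
  have h2 := sq2_pb hG
  have h3 := sq2_mk2_pos hG ha hb hab
  have hm0pos : 0 < (a*(1-b))*(a*(1-b)) := by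
    have : 0 < a*(1-b) := mul_pos ha (by linarith)
    positivity
  linarith
-- ## Stage 1 : mixtures, edge density linearity, Lipschitz continuity of triangle density

lemma graphon_sec_int {g : ℝ → ℝ → ℝ} (hg : IsGraphon g) (x : ℝ) :
    IntegrableOn (fun y => g x y) I01 :=
  integrableOn_I01_of_bdd hg.1.of_uncurry_left (fun y => graphon_abs hg x y)

lemma edge_nonneg {g : ℝ → ℝ → ℝ} (hg : IsGraphon g) : 0 ≤ edgeDensity g :=
  setIntegral_nonneg measurableSet_I01 (fun x _ =>
    setIntegral_nonneg measurableSet_I01 (fun y _ => (hg.2.2 x y).1))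

lemma edge_le_one {g : ℝ → ℝ → ℝ} (hg : IsGraphon g) : edgeDensity g ≤ 1 := by
  have hinner : ∀ x, (∫ y in I01, g x y) ≤ 1 := by
    intro x
    calc (∫ y in I01, g x y) ≤ ∫ _ in I01, (1:ℝ) :=
          setIntegral_mono_on (graphon_sec_int hg x)
            (integrableOn_const (by simp [I01])) measurableSet_I01
            (fun y _ => (hg.2.2 x y).2)
      _ = 1 := by rw [setIntegral_const, measureReal_def, measure_I01_toReal, one_smul]
  calc edgeDensity g ≤ ∫ _ in I01, (1:ℝ) :=
        setIntegral_mono_on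
          (integrableOn_I01_of_bdd (meas_inner hg.1) (abs_inner_le (graphon_abs hg)))
          (integrableOn_const (by simp [I01])) measurableSet_I01
          (fun x _ => hinner x)
    _ = 1 := by rw [setIntegral_const, measureReal_def, measure_I01_toReal, one_smul]

lemma isGraphon_const {c : ℝ} (h : c ∈ Icc (0:ℝ) 1) : IsGraphon (fun _ _ => c) :=
  ⟨measurable_const, fun _ _ => rfl, fun _ _ => h⟩

lemma edge_const (c : ℝ) : edgeDensity (fun _ _ => c) = c := by
  unfold edgeDensity
  rw [setIntegral_const, setIntegral_const, measureReal_def, measure_I01_toReal, one_smul, one_smul]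

def mixf (s : ℝ) (p q : ℝ → ℝ → ℝ) : ℝ → ℝ → ℝ := fun x y => (1-s) * p x y + s * q x y

lemma isGraphon_mixf {p q : ℝ → ℝ → ℝ} (hp : IsGraphon p) (hq : IsGraphon q) {s : ℝ}
    (hs : s ∈ Icc (0:ℝ) 1) : IsGraphon (mixf s p q) := by
  refine ⟨?_, ?_, ?_⟩
  · have : Measurable fun pt : ℝ × ℝ => (1-s) * Function.uncurry p pt + s * Function.uncurry q pt :=
      (measurable_const.mul hp.1).add (measurable_const.mul hq.1)
    exact this
  · intro x y
    unfold mixf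
    rw [hp.2.1 x y, hq.2.1 x y]
  · intro x y
    have h1 := hp.2.2 x y
    have h2 := hq.2.2 x y
    have hs0 := hs.1
    have hs1 := hs.2
    constructor
    · exact add_nonneg (mul_nonneg (by linarith) h1.1) (mul_nonneg hs0 h2.1)
    · have a1 : (1-s) * p x y ≤ (1-s) * 1 := mul_le_mul_of_nonneg_left h1.2 (by linarith)
      have a2 : s * q x y ≤ s * 1 := mul_le_mul_of_nonneg_left h2.2 hs0
      unfold mixf
      linarith

lemma edge_mixf {p q : ℝ → ℝ → ℝ} (hp : IsGraphon p) (hq : IsGraphon q) (s : ℝ) :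
    edgeDensity (mixf s p q) = (1-s) * edgeDensity p + s * edgeDensity q := by
  unfold edgeDensity
  have hinner : ∀ x, (∫ y in I01, mixf s p q x y)
      = (1-s) * (∫ y in I01, p x y) + s * ∫ y in I01, q x y := by
    intro x
    have i1 : IntegrableOn (fun y => (1-s) * p x y) I01 :=
      (graphon_sec_int hp x).const_mul (1-s)
    have i2 : IntegrableOn (fun y => s * q x y) I01 :=
      (graphon_sec_int hq x).const_mul s
    calc (∫ y in I01, mixf s p q x y)
        = (∫ y in I01, (1-s) * p x y) + ∫ y in I01, s * q x y := integral_add i1 i2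
      _ = (1-s) * (∫ y in I01, p x y) + s * ∫ y in I01, q x y := by
          rw [integral_const_mul, integral_const_mul]
  rw [int_cong _ _ hinner]
  have j1 : IntegrableOn (fun x => (1-s) * ∫ y in I01, p x y) I01 :=
    (integrableOn_I01_of_bdd (meas_inner hp.1) (abs_inner_le (graphon_abs hp))).const_mul (1-s)
  have j2 : IntegrableOn (fun x => s * ∫ y in I01, q x y) I01 :=
    (integrableOn_I01_of_bdd (meas_inner hq.1) (abs_inner_le (graphon_abs hq))).const_mul s
  calc (∫ x in I01, ((1-s) * (∫ y in I01, p x y) + s * ∫ y in I01, q x y))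
      = (∫ x in I01, (1-s) * ∫ y in I01, p x y) + ∫ x in I01, s * ∫ y in I01, q x y :=
        integral_add j1 j2
    _ = (1-s) * (∫ x in I01, ∫ y in I01, p x y) + s * ∫ x in I01, ∫ y in I01, q x y := by
        rw [integral_const_mul, integral_const_mul]

lemma int_diff_bound {f g : ℝ → ℝ} (hf : IntegrableOn f I01) (hg : IntegrableOn g I01) {d : ℝ}
    (h : ∀ x, |f x - g x| ≤ d) : |(∫ x in I01, f x) - ∫ x in I01, g x| ≤ d := by
  rw [← integral_sub hf hg]
  exact abs_integral_le h

lemma prod3_diff {a1 a2 a3 b1 b2 b3 : ℝ} (ha1 : |a1| ≤ 1) (ha2 : |a2| ≤ 1) (ha3 : |a3| ≤ 1)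
    (hb1 : |b1| ≤ 1) (hb2 : |b2| ≤ 1) :
    |a1*a2*a3 - b1*b2*b3| ≤ |a1-b1| + |a2-b2| + |a3-b3| := by
  have key : a1*a2*a3 - b1*b2*b3
      = (a1-b1)*(a2*a3) + (b1*(a2-b2))*a3 + (b1*b2)*(a3-b3) := by ring
  rw [key]
  have t1 : |(a1-b1)*(a2*a3)| ≤ |a1-b1| := by
    rw [abs_mul]
    calc |a1-b1| * |a2*a3| ≤ |a1-b1| * 1 :=
          mul_le_mul_of_nonneg_left (abs_mul_le_one ha2 ha3) (abs_nonneg _)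
      _ = |a1-b1| := mul_one _
  have t2 : |(b1*(a2-b2))*a3| ≤ |a2-b2| := by
    rw [abs_mul, abs_mul]
    calc |b1| * |a2-b2| * |a3| ≤ 1 * |a2-b2| * 1 :=
          mul_le_mul (mul_le_mul hb1 le_rfl (abs_nonneg _) zero_le_one) ha3 (abs_nonneg _)
            (by positivity)
      _ = |a2-b2| := by ring
  have t3 : |(b1*b2)*(a3-b3)| ≤ |a3-b3| := by
    rw [abs_mul]
    calc |b1*b2| * |a3-b3| ≤ 1 * |a3-b3| :=
          mul_le_mul_of_nonneg_right (abs_mul_le_one hb1 hb2) (abs_nonneg _)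
      _ = |a3-b3| := one_mul _
  calc |(a1-b1)*(a2*a3) + (b1*(a2-b2))*a3 + (b1*b2)*(a3-b3)|
      ≤ |(a1-b1)*(a2*a3) + (b1*(a2-b2))*a3| + |(b1*b2)*(a3-b3)| := abs_add_le _ _
    _ ≤ |(a1-b1)*(a2*a3)| + |(b1*(a2-b2))*a3| + |(b1*b2)*(a3-b3)| := by
        have := abs_add_le ((a1-b1)*(a2*a3)) ((b1*(a2-b2))*a3)
        linarith
    _ ≤ |a1-b1| + |a2-b2| + |a3-b3| := by linarith

lemma meas_tri3 {p : ℝ → ℝ → ℝ} (hp : IsGraphon p) (x : ℝ) :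
    Measurable (Function.uncurry fun y z => p x y * p y z * p z x) := by
  have : Measurable fun q : ℝ × ℝ => p x q.1 * p q.1 q.2 * p q.2 x :=
    (((hp.1.of_uncurry_left).comp measurable_fst).mul hp.1).mul
      ((hp.1.of_uncurry_right).comp measurable_snd)
  exact this

lemma tri3_abs {p : ℝ → ℝ → ℝ} (hp : IsGraphon p) (x y z : ℝ) :
    |p x y * p y z * p z x| ≤ 1 :=
  abs_mul_le_one (abs_mul_le_one (graphon_abs hp x y) (graphon_abs hp y z)) (graphon_abs hp z x)

lemma tri_lip {p q : ℝ → ℝ → ℝ} (hp : IsGraphon p) (hq : IsGraphon q) {d : ℝ}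
    (hd : ∀ x y, |p x y - q x y| ≤ d) : |triDensity p - triDensity q| ≤ 3*d := by
  have hzlev : ∀ x y : ℝ, |(∫ z in I01, p x y * p y z * p z x)
      - ∫ z in I01, q x y * q y z * q z x| ≤ 3*d := by
    intro x y
    refine int_diff_bound ?_ ?_ (fun z => ?_)
    · exact integrableOn_I01_of_bdd ((meas_tri3 hp x).of_uncurry_left (x := y))
        (fun z => tri3_abs hp x y z)
    · exact integrableOn_I01_of_bdd ((meas_tri3 hq x).of_uncurry_left (x := y))
        (fun z => tri3_abs hq x y z)
    · have := prod3_diff (b3 := q z x) (graphon_abs hp x y) (graphon_abs hp y z)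
        (graphon_abs hp z x) (graphon_abs hq x y) (graphon_abs hq y z)
      have h1 := hd x y
      have h2 := hd y z
      have h3 := hd z x
      linarith
  have meas_y : ∀ (r : ℝ → ℝ → ℝ), IsGraphon r →
      ∀ x : ℝ, Measurable fun y => ∫ z in I01, r x y * r y z * r z x := by
    intro r hr x
    exact meas_inner (f := fun y z => r x y * r y z * r z x) (meas_tri3 hr x)
  have hylev : ∀ x : ℝ, |(∫ y in I01, ∫ z in I01, p x y * p y z * p z x)
      - ∫ y in I01, ∫ z in I01, q x y * q y z * q z x| ≤ 3*d := by
    intro x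
    refine int_diff_bound ?_ ?_ (fun y => hzlev x y)
    · exact integrableOn_I01_of_bdd (meas_y p hp x)
        (fun y => abs_integral_le (fun z => tri3_abs hp x y z))
    · exact integrableOn_I01_of_bdd (meas_y q hq x)
        (fun y => abs_integral_le (fun z => tri3_abs hq x y z))
  have meas_x : ∀ (r : ℝ → ℝ → ℝ), IsGraphon r →
      Measurable fun x => ∫ y in I01, ∫ z in I01, r x y * r y z * r z x := by
    intro r hr
    refine meas_inner (f := fun x y => ∫ z in I01, r x y * r y z * r z x) ?_
    have : Measurable fun pt : ℝ × ℝ =>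
        ∫ z in I01, (fun q : (ℝ × ℝ) × ℝ => r q.1.1 q.1.2 * r q.1.2 q.2 * r q.2 q.1.1) (pt, z) := by
      refine StronglyMeasurable.measurable ?_
      refine StronglyMeasurable.integral_prod_right'
        (f := fun q : (ℝ × ℝ) × ℝ => r q.1.1 q.1.2 * r q.1.2 q.2 * r q.2 q.1.1) ?_
      refine Measurable.stronglyMeasurable ?_
      exact ((hr.1.comp ((measurable_fst.comp measurable_fst).prodMk
          (measurable_snd.comp measurable_fst))).mul
        (hr.1.comp ((measurable_snd.comp measurable_fst).prodMk measurable_snd))).mul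
        (hr.1.comp (measurable_snd.prodMk (measurable_fst.comp measurable_fst)))
    exact this
  refine int_diff_bound ?_ ?_ hylev
  · exact integrableOn_I01_of_bdd (meas_x p hp)
      (fun x => abs_integral_le (fun y => abs_integral_le (fun z => tri3_abs hp x y z)))
  · exact integrableOn_I01_of_bdd (meas_x q hq)
      (fun x => abs_integral_le (fun y => abs_integral_le (fun z => tri3_abs hq x y z)))

lemma mixf_dist {p q : ℝ → ℝ → ℝ} (hp : IsGraphon p) (hq : IsGraphon q) (s u : ℝ) :
    ∀ x y, |mixf s p q x y - mixf u p q x y| ≤ |s - u| := by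
  intro x y
  have : mixf s p q x y - mixf u p q x y = (s-u) * (q x y - p x y) := by
    unfold mixf; ring
  rw [this, abs_mul]
  have h1 := (hp.2.2 x y).1
  have h2 := (hp.2.2 x y).2
  have h3 := (hq.2.2 x y).1
  have h4 := (hq.2.2 x y).2
  have : |q x y - p x y| ≤ 1 := by
    rw [abs_le]; constructor <;> linarith
  calc |s-u| * |q x y - p x y| ≤ |s-u| * 1 :=
        mul_le_mul_of_nonneg_left this (abs_nonneg _)
    _ = |s-u| := mul_one _

lemma ivt_mix {p q : ℝ → ℝ → ℝ} (hp : IsGraphon p) (hq : IsGraphon q) {t : ℝ}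
    (h1 : triDensity p ≤ t) (h2 : t ≤ triDensity q) :
    ∃ s ∈ Icc (0:ℝ) 1, triDensity (mixf s p q) = t := by
  set f : ℝ → ℝ := fun s => triDensity (mixf s p q) with hf
  have hlip : ∀ s ∈ Icc (0:ℝ) 1, ∀ u ∈ Icc (0:ℝ) 1, |f s - f u| ≤ 3 * |s - u| := by
    intro s hs u hu
    exact tri_lip (isGraphon_mixf hp hq hs) (isGraphon_mixf hp hq hu) (mixf_dist hp hq s u)
  have hcont : ContinuousOn f (Icc (0:ℝ) 1) := by
    rw [Metric.continuousOn_iff]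
    intro s hs ε hε
    refine ⟨ε/4, by positivity, fun u hu hd => ?_⟩
    have := hlip u hu s hs
    rw [Real.dist_eq] at hd ⊢
    calc |f u - f s| ≤ 3 * |u - s| := this
      _ < 3 * (ε/4) := by
          have : 0 ≤ |u - s| := abs_nonneg _
          nlinarith
      _ < ε := by linarith
  have e0 : f 0 = triDensity p := by
    have : mixf 0 p q = p := by
      funext x y
      unfold mixf
      ring
    show triDensity (mixf 0 p q) = triDensity p
    rw [this]
  have e1 : f 1 = triDensity q := by
    have : mixf 1 p q = q := by
      funext x y
      unfold mixf
      ring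
    show triDensity (mixf 1 p q) = triDensity q
    rw [this]
  have hsub := intermediate_value_Icc (zero_le_one) hcont
  have : t ∈ Icc (f 0) (f 1) := by
    rw [e0, e1]; exact ⟨h1, h2⟩
  obtain ⟨s, hs, hfs⟩ := hsub this
  exact ⟨s, hs, hfs⟩

theorem interior_points_not_finitely_forced (ε₀ τ₀ : ℝ)
    (h : (ε₀, τ₀) ∈ interior Razborov) :
    ∃ g g' : ℝ → ℝ → ℝ, IsGraphon g ∧ IsGraphon g' ∧
      edgeDensity g = ε₀ ∧ edgeDensity g' = ε₀ ∧
      triDensity g = τ₀ ∧ triDensity g' = τ₀ ∧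
      ¬ GraphonEquiv g g' := by
  obtain ⟨r, hr, hball⟩ := Metric.mem_nhds_iff.1 (mem_interior_iff_mem_nhds.1 h)
  obtain ⟨g₀, hg₀, he₀, ht₀⟩ := interior_subset h
  have he₀' : edgeDensity g₀ = ε₀ := he₀
  have ht₀' : triDensity g₀ = τ₀ := ht₀
  have hrpos : 0 < r/2 := by linarith
  -- the four nearby points
  have hu : ((ε₀, τ₀ + r/2) : ℝ × ℝ) ∈ Razborov := by
    apply hball
    rw [Metric.mem_ball, Prod.dist_eq]
    have h1 : dist ε₀ ε₀ = 0 := dist_self _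
    have h2 : dist (τ₀ + r/2) τ₀ = r/2 := by
      rw [Real.dist_eq, show τ₀ + r/2 - τ₀ = r/2 by ring]
      exact abs_of_nonneg (by linarith)
    rw [h1, h2, max_eq_right (by linarith)]
    linarith
  have hd : ((ε₀, τ₀ - r/2) : ℝ × ℝ) ∈ Razborov := by
    apply hball
    rw [Metric.mem_ball, Prod.dist_eq]
    have h1 : dist ε₀ ε₀ = 0 := dist_self _
    have h2 : dist (τ₀ - r/2) τ₀ = r/2 := by
      rw [Real.dist_eq, show τ₀ - r/2 - τ₀ = -(r/2) by ring, abs_neg]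
      exact abs_of_nonneg (by linarith)
    rw [h1, h2, max_eq_right (by linarith)]
    linarith
  have hl : ((ε₀ - r/2, τ₀) : ℝ × ℝ) ∈ Razborov := by
    apply hball
    rw [Metric.mem_ball, Prod.dist_eq]
    have h1 : dist (ε₀ - r/2) ε₀ = r/2 := by
      rw [Real.dist_eq, show ε₀ - r/2 - ε₀ = -(r/2) by ring, abs_neg]
      exact abs_of_nonneg (by linarith)
    have h2 : dist τ₀ τ₀ = 0 := dist_self _
    rw [h1, h2, max_eq_left (by linarith)]
    linarith
  have hrt : ((ε₀ + r/2, τ₀) : ℝ × ℝ) ∈ Razborov := by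
    apply hball
    rw [Metric.mem_ball, Prod.dist_eq]
    have h1 : dist (ε₀ + r/2) ε₀ = r/2 := by
      rw [Real.dist_eq, show ε₀ + r/2 - ε₀ = r/2 by ring]
      exact abs_of_nonneg (by linarith)
    have h2 : dist τ₀ τ₀ = 0 := dist_self _
    rw [h1, h2, max_eq_left (by linarith)]
    linarith
  obtain ⟨gu, hgu, heu, htu⟩ := hu
  obtain ⟨gd, hgd, hed, htd⟩ := hd
  obtain ⟨gl, hgl, hel, _⟩ := hl
  obtain ⟨grt, hgrt, her, _⟩ := hrt
  have heu' : edgeDensity gu = ε₀ := heu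
  have htu' : triDensity gu = τ₀ + r/2 := htu
  have hed' : edgeDensity gd = ε₀ := hed
  have htd' : triDensity gd = τ₀ - r/2 := htd
  have hε0 : 0 < ε₀ := by
    have h1 := edge_nonneg hgl
    have h2 : edgeDensity gl = ε₀ - r/2 := hel
    linarith
  have hε1 : ε₀ < 1 := by
    have h1 := edge_le_one hgrt
    have h2 : edgeDensity grt = ε₀ + r/2 := her
    linarith
  have hcg : IsGraphon (fun _ _ : ℝ => ε₀) := isGraphon_const ⟨le_of_lt hε0, le_of_lt hε1⟩
  have hm : IsGraphon (mixf (1/2) g₀ (fun _ _ => ε₀)) :=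
    isGraphon_mixf hg₀ hcg ⟨by norm_num, by norm_num⟩
  have hem : edgeDensity (mixf (1/2) g₀ (fun _ _ => ε₀)) = ε₀ := by
    rw [edge_mixf hg₀ hcg, he₀', edge_const]
    ring
  have hm_lb : ∀ x y, ε₀/2 ≤ mixf (1/2) g₀ (fun _ _ => ε₀) x y := by
    intro x y
    have h1 := (hg₀.2.2 x y).1
    show ε₀/2 ≤ (1-1/2) * g₀ x y + (1/2) * ε₀
    nlinarith
  have hm_ub : ∀ x y, mixf (1/2) g₀ (fun _ _ => ε₀) x y ≤ (1+ε₀)/2 := by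
    intro x y
    have h1 := (hg₀.2.2 x y).2
    show (1-1/2) * g₀ x y + (1/2) * ε₀ ≤ (1+ε₀)/2
    nlinarith
  rcases le_or_gt (triDensity (mixf (1/2) g₀ (fun _ _ => ε₀))) τ₀ with hcase | hcase
  · -- mix towards gu
    obtain ⟨s, hs, hτs⟩ := ivt_mix hm hgu hcase (by rw [htu']; linarith)
    have hs1 : s < 1 := by
      rcases lt_or_eq_of_le hs.2 with h' | h'
      · exact h'
      · exfalso
        rw [h'] at hτs
        have he : mixf 1 (mixf (1/2) g₀ (fun _ _ => ε₀)) gu = gu := by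
          funext x y; unfold mixf; ring
        rw [he, htu'] at hτs
        linarith
    set G := mixf s (mixf (1/2) g₀ (fun _ _ => ε₀)) gu with hGdef
    have hG : IsGraphon G := isGraphon_mixf hm hgu hs
    have ha : 0 < (1-s)*(ε₀/2) := mul_pos (by linarith) (by linarith)
    have hb : 1 - (1-s)*((1-ε₀)/2) < 1 := by
      have : 0 < (1-s)*((1-ε₀)/2) := mul_pos (by linarith) (by linarith)
      linarith
    have hab : ∀ x y, (1-s)*(ε₀/2) ≤ G x y ∧ G x y ≤ 1 - (1-s)*((1-ε₀)/2) := by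
      intro x y
      have hGxy : G x y = (1-s) * (mixf (1/2) g₀ (fun _ _ => ε₀) x y) + s * gu x y := rfl
      have hgu1 := (hgu.2.2 x y).1
      have hgu2 := (hgu.2.2 x y).2
      have hml := hm_lb x y
      have hmu := hm_ub x y
      have c1 : (1-s)*(ε₀/2) ≤ (1-s) * (mixf (1/2) g₀ (fun _ _ => ε₀) x y) :=
        mul_le_mul_of_nonneg_left hml (by linarith)
      have c2 : (1-s) * (mixf (1/2) g₀ (fun _ _ => ε₀) x y) ≤ (1-s) * ((1+ε₀)/2) :=
        mul_le_mul_of_nonneg_left hmu (by linarith)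
      have c3 : 0 ≤ s * gu x y := mul_nonneg hs.1 hgu1
      have c4 : s * gu x y ≤ s * 1 := mul_le_mul_of_nonneg_left hgu2 hs.1
      have hid : (1-s) * ((1+ε₀)/2) + s * 1 = 1 - (1-s)*((1-ε₀)/2) := by ring
      constructor
      · rw [hGxy]; linarith
      · rw [hGxy]; linarith
    have hedgeG : edgeDensity G = ε₀ := by
      rw [hGdef, edge_mixf hm hgu, hem, heu']
      ring
    obtain ⟨g, g', hg, hg', e1, e2, t1, t2, hne⟩ := main_construct hG ha hb hab
    exact ⟨g, g', hg, hg', e1.trans hedgeG, e2.trans hedgeG,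
      t1.trans hτs, t2.trans hτs, hne⟩
  · -- mix from gd towards m
    obtain ⟨s, hs, hτs⟩ := ivt_mix hgd hm (by rw [htd']; linarith) (le_of_lt hcase)
    have hs0 : 0 < s := by
      rcases lt_or_eq_of_le hs.1 with h' | h'
      · exact h'
      · exfalso
        rw [← h'] at hτs
        have he : mixf 0 gd (mixf (1/2) g₀ (fun _ _ => ε₀)) = gd := by
          funext x y; unfold mixf; ring
        rw [he, htd'] at hτs
        linarith
    set G := mixf s gd (mixf (1/2) g₀ (fun _ _ => ε₀)) with hGdef
    have hG : IsGraphon G := isGraphon_mixf hgd hm hs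
    have ha : 0 < s*(ε₀/2) := mul_pos hs0 (by linarith)
    have hb : 1 - s*((1-ε₀)/2) < 1 := by
      have : 0 < s*((1-ε₀)/2) := mul_pos hs0 (by linarith)
      linarith
    have hab : ∀ x y, s*(ε₀/2) ≤ G x y ∧ G x y ≤ 1 - s*((1-ε₀)/2) := by
      intro x y
      have hGxy : G x y = (1-s) * gd x y + s * (mixf (1/2) g₀ (fun _ _ => ε₀) x y) := rfl
      have hgd1 := (hgd.2.2 x y).1
      have hgd2 := (hgd.2.2 x y).2
      have hml := hm_lb x y
      have hmu := hm_ub x y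
      have c1 : 0 ≤ (1-s) * gd x y := mul_nonneg (by linarith [hs.2]) hgd1
      have c2 : (1-s) * gd x y ≤ (1-s) * 1 := mul_le_mul_of_nonneg_left hgd2 (by linarith [hs.2])
      have c3 : s*(ε₀/2) ≤ s * (mixf (1/2) g₀ (fun _ _ => ε₀) x y) :=
        mul_le_mul_of_nonneg_left hml hs.1
      have c4 : s * (mixf (1/2) g₀ (fun _ _ => ε₀) x y) ≤ s * ((1+ε₀)/2) :=
        mul_le_mul_of_nonneg_left hmu hs.1
      have hid : (1-s) * 1 + s * ((1+ε₀)/2) = 1 - s*((1-ε₀)/2) := by ring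
      constructor
      · rw [hGxy]; linarith
      · rw [hGxy]; linarith
    have hedgeG : edgeDensity G = ε₀ := by
      rw [hGdef, edge_mixf hgd hm, hed', hem]
      ring
    obtain ⟨g, g', hg, hg', e1, e2, t1, t2, hne⟩ := main_construct hG ha hb hab
    exact ⟨g, g', hg, hg', e1.trans hedgeG, e2.trans hedgeG,
      t1.trans hτs, t2.trans hτs, hne⟩
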